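/- arXiv:1211.3378 — 6 statements merged into one kernel-verified Lean document; each statement's English description precedes it below -/
import Mathlib

section
/- Let T be a minimal nontrivial R-tree with an isometric action of a countable group G such that every G-orbit is dense in T and T contains at least one branch point. Then T is not a complete metric space. -/
open Pointwise

/-- The segment `[x,y]` in a metric space (in an `ℝ`-tree this is the arc from `x` to `y`). -/
def seg {T : Type*} [MetricSpace T] (x y : T) : Set T :=
  {z : T | dist x z + dist z y = dist x y}

/-- An `ℝ`-tree: a geodesic metric space that is `0`-hyperbolic (four-point condition),
equivalently any two points are joined by a unique arc, isometric to a real interval. -/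
def IsRTree (T : Type*) [MetricSpace T] : Prop :=
  (∀ x y : T, ∃ f : ℝ → T, f 0 = x ∧ f (dist x y) = y ∧
      ∀ s ∈ Set.Icc (0 : ℝ) (dist x y), ∀ t ∈ Set.Icc (0 : ℝ) (dist x y),
        dist (f s) (f t) = |s - t|) ∧
  ∀ x y z w : T, dist x y + dist z w ≤ max (dist x z + dist y w) (dist x w + dist y z)

/-- A subtree: a convex subset. -/
def IsSubtree {T : Type*} [MetricSpace T] (Y : Set T) : Prop :=
  ∀ x ∈ Y, ∀ y ∈ Y, seg x y ⊆ Y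

/-- An arc: a subset isometric to a nondegenerate closed real interval. -/
def IsArc {T : Type*} [MetricSpace T] (A : Set T) : Prop :=
  ∃ (a b : ℝ) (f : ℝ → T), a < b ∧
    (∀ s ∈ Set.Icc a b, ∀ t ∈ Set.Icc a b, dist (f s) (f t) = |s - t|) ∧
    A = f '' Set.Icc a b

/-- A transverse family: a `G`-invariant collection of nondegenerate subtrees, any two
distinct members of which intersect in at most one point. -/
structure IsTransverseFamily (G : Type*) {T : Type*} [Group G] [MulAction G T]
    [MetricSpace T] (F : Set (Set T)) : Prop where
  invariant : ∀ (g : G), ∀ Y ∈ F, g • Y ∈ F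
  subtree : ∀ Y ∈ F, IsSubtree Y
  nondeg : ∀ Y ∈ F, ¬Y.Subsingleton
  transverse : ∀ Y ∈ F, ∀ Y' ∈ F, Y ≠ Y' → (Y ∩ Y').Subsingleton

/-- A minimal action: no proper nonempty invariant subtree. -/
def IsMinimalAction (G : Type*) (T : Type*) [Group G] [MulAction G T] [MetricSpace T] : Prop :=
  ∀ Y : Set T, Y.Nonempty → IsSubtree Y → (∀ g : G, g • Y = Y) → Y = Set.univ

/-- A branch point: a point whose removal leaves at least three connected components. -/
def IsBranchPoint {T : Type*} [MetricSpace T] (x : T) : Prop :=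
  ∃ y z w : T, y ≠ x ∧ z ≠ x ∧ w ≠ x ∧
    connectedComponentIn {x}ᶜ y ≠ connectedComponentIn {x}ᶜ z ∧
    connectedComponentIn {x}ᶜ y ≠ connectedComponentIn {x}ᶜ w ∧
    connectedComponentIn {x}ᶜ z ≠ connectedComponentIn {x}ᶜ w

section Aux

variable {T : Type*} [MetricSpace T]

lemma isClosed_seg (x y : T) : IsClosed (seg x y) :=
  isClosed_eq ((continuous_const.dist continuous_id).add
    (continuous_id.dist continuous_const)) continuous_const

lemma mem_seg_comm {x y z : T} (h : z ∈ seg x y) : z ∈ seg y x := by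
  simp only [seg, Set.mem_setOf_eq] at *
  rw [dist_comm y z, dist_comm z x, dist_comm y x]
  linarith

lemma seg_split
    (h4 : ∀ x y z w : T, dist x y + dist z w ≤ max (dist x z + dist y w) (dist x w + dist y z))
    {p q z : T} (hz : z ∈ seg p q) (r : T) : z ∈ seg p r ∨ z ∈ seg r q := by
  simp only [seg, Set.mem_setOf_eq] at hz ⊢
  have h := h4 z r p q
  rcases le_max_iff.1 h with h' | h'
  · right
    have t : dist r q ≤ dist r z + dist z q := dist_triangle r z q
    have e1 : dist z r = dist r z := dist_comm z r
    have e2 : dist p z = dist z p := dist_comm p z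
    linarith
  · left
    have t : dist p r ≤ dist p z + dist z r := dist_triangle p z r
    have e1 : dist r p = dist p r := dist_comm r p
    have e2 : dist z q = dist q z := dist_comm z q
    have e3 : dist q z = dist z q := dist_comm q z
    linarith

lemma seg_trans {a b q z : T} (h1 : z ∈ seg a q) (h2 : q ∈ seg a b) : z ∈ seg a b := by
  simp only [seg, Set.mem_setOf_eq] at *
  have t1 : dist z b ≤ dist z q + dist q b := dist_triangle z q b
  have t2 : dist a b ≤ dist a z + dist z b := dist_triangle a z b
  linarith

/-- In an `ℝ`-tree, `seg x y` is the image of a geodesic from `x` to `y`. -/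
lemma seg_eq_image (hT : IsRTree T) (x y : T) :
    ∃ f : ℝ → T, f 0 = x ∧ f (dist x y) = y ∧
      (∀ s ∈ Set.Icc (0:ℝ) (dist x y), ∀ t ∈ Set.Icc (0:ℝ) (dist x y),
        dist (f s) (f t) = |s - t|) ∧
      seg x y = f '' Set.Icc 0 (dist x y) := by
  obtain ⟨f, hf0, hfD, hfiso⟩ := hT.1 x y
  refine ⟨f, hf0, hfD, hfiso, ?_⟩
  have hD : (0:ℝ) ≤ dist x y := dist_nonneg
  have h0m : (0:ℝ) ∈ Set.Icc (0:ℝ) (dist x y) := ⟨le_rfl, hD⟩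
  have hDm : dist x y ∈ Set.Icc (0:ℝ) (dist x y) := ⟨hD, le_rfl⟩
  ext z
  constructor
  · intro hz
    simp only [seg, Set.mem_setOf_eq] at hz
    set s := dist x z with hs
    have hsm : s ∈ Set.Icc (0:ℝ) (dist x y) :=
      ⟨dist_nonneg, by have := dist_nonneg (x := z) (y := y); linarith⟩
    have h1 : dist (f s) x = s := by
      have := hfiso s hsm 0 h0m
      rw [hf0] at this
      rw [this, sub_zero, abs_of_nonneg hsm.1]
    have h2 : dist (f s) y = dist x y - s := by
      have := hfiso s hsm (dist x y) hDm
      rw [hfD] at this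
      rw [this, abs_of_nonpos (by linarith [hsm.2])]
      ring
    have h4 := hT.2 (f s) z x y
    have hzy : dist z y = dist x y - s := by linarith
    have hzx : dist z x = s := by rw [dist_comm]
    rw [h1, h2, hzx, hzy] at h4
    have : dist (f s) z + dist x y ≤ dist x y := by
      rcases le_max_iff.1 h4 with h | h <;> linarith
    have hz0 : dist (f s) z = 0 := le_antisymm (by linarith) dist_nonneg
    exact ⟨s, hsm, (eq_of_dist_eq_zero hz0)⟩
  · rintro ⟨s, hsm, rfl⟩
    simp only [seg, Set.mem_setOf_eq]
    have h1 : dist x (f s) = s := by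
      have := hfiso 0 h0m s hsm
      rw [hf0] at this
      rw [this, zero_sub, abs_neg, abs_of_nonneg hsm.1]
    have h2 : dist (f s) y = dist x y - s := by
      have := hfiso s hsm (dist x y) hDm
      rw [hfD] at this
      rw [this, abs_of_nonpos (by linarith [hsm.2])]
      ring
    linarith

variable {G : Type*} [Group G] [MulAction G T]

lemma smul_mem_seg (hiso : ∀ g : G, Isometry fun x : T => g • x) (g : G) {x y z : T}
    (h : z ∈ seg x y) : g • z ∈ seg (g • x) (g • y) := by
  simp only [seg, Set.mem_setOf_eq] at *
  have e1 : dist (g • x) (g • z) = dist x z := (hiso g).dist_eq x z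
  have e2 : dist (g • z) (g • y) = dist z y := (hiso g).dist_eq z y
  have e3 : dist (g • x) (g • y) = dist x y := (hiso g).dist_eq x y
  rw [e1, e2, e3]; exact h

/-- Branch points are preserved by the isometric action. -/
lemma isBranchPoint_smul (hiso : ∀ g : G, Isometry fun x : T => g • x) (g : G) {x : T}
    (hx : IsBranchPoint x) : IsBranchPoint (g • x) := by
  obtain ⟨y, z, w, hy, hz, hw, h1, h2, h3⟩ := hx
  let φ : T ≃ₜ T :=
    { toFun := fun a => g • a
      invFun := fun a => g⁻¹ • a
      left_inv := fun a => inv_smul_smul g a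
      right_inv := fun a => smul_inv_smul g a
      continuous_toFun := (hiso g).continuous
      continuous_invFun := (hiso g⁻¹).continuous }
  have himg : φ '' ({x}ᶜ) = {g • x}ᶜ := by
    rw [Set.image_compl_eq φ.bijective, Set.image_singleton]
    rfl
  have key : ∀ a : T, a ≠ x →
      φ '' connectedComponentIn {x}ᶜ a = connectedComponentIn {g • x}ᶜ (g • a) := by
    intro a ha
    rw [φ.image_connectedComponentIn (show a ∈ ({x}ᶜ : Set T) from ha), himg]
    rfl
  have comps : ∀ a b : T, a ≠ x → b ≠ x →
      connectedComponentIn {x}ᶜ a ≠ connectedComponentIn {x}ᶜ b →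
      connectedComponentIn {g • x}ᶜ (g • a) ≠ connectedComponentIn {g • x}ᶜ (g • b) := by
    intro a b ha hb hne h
    apply hne
    apply Set.image_injective.mpr φ.injective
    rw [key a ha, key b hb]; exact h
  exact ⟨g • y, g • z, g • w,
    fun h => hy (smul_left_cancel g h),
    fun h => hz (smul_left_cancel g h),
    fun h => hw (smul_left_cancel g h),
    comps y z hy hz h1, comps y w hy hw h2, comps z w hz hw h3⟩

end Aux

/-- A minimal nontrivial `ℝ`-tree with an isometric action of a countable group with dense
orbits and containing a branch point is not complete. -/
theorem not_completeSpace_of_minimal_denseOrbits_branchPoint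
    {T G : Type*} [MetricSpace T] [Group G] [Countable G] [MulAction G T]
    (hT : IsRTree T) (hiso : ∀ g : G, Isometry fun x : T => g • x)
    (hmin : IsMinimalAction G T) (hnontriv : ∃ x y : T, x ≠ y)
    (hdense : ∀ x : T, Dense (MulAction.orbit G x : Set T))
    (hbranch : ∃ x : T, IsBranchPoint x) :
    ¬CompleteSpace T := by
  intro hcomp
  obtain ⟨x₀, y₀, hxy⟩ := hnontriv
  haveI : Nonempty T := ⟨x₀⟩
  -- the countable closed cover by segments between orbit points
  set F : G × G → Set T := fun p => seg (p.1 • x₀) (p.2 • x₀) with hF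
  have hclosed : ∀ p, IsClosed (F p) := fun p => isClosed_seg _ _
  have hUsub : IsSubtree (⋃ p : G × G, F p) := by
    rintro u hu v hv z hz
    simp only [Set.mem_iUnion] at hu hv ⊢
    obtain ⟨⟨g1, k1⟩, hu⟩ := hu
    obtain ⟨⟨g2, k2⟩, hv⟩ := hv
    rcases seg_split hT.2 hz (g2 • x₀) with h | h
    · rcases seg_split hT.2 h (g1 • x₀) with h' | h'
      · exact ⟨(g1, k1), seg_trans (mem_seg_comm h') hu⟩
      · exact ⟨(g1, g2), h'⟩
    · exact ⟨(g2, k2), seg_trans h hv⟩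
  have hUinv : ∀ g : G, g • (⋃ p : G × G, F p) = ⋃ p : G × G, F p := by
    intro g
    ext z
    simp only [Set.mem_smul_set_iff_inv_smul_mem, Set.mem_iUnion]
    constructor
    · rintro ⟨⟨g1, k1⟩, h⟩
      refine ⟨(g * g1, g * k1), ?_⟩
      have := smul_mem_seg hiso g h
      rwa [smul_inv_smul, smul_smul, smul_smul] at this
    · rintro ⟨⟨g1, k1⟩, h⟩
      refine ⟨(g⁻¹ * g1, g⁻¹ * k1), ?_⟩
      have := smul_mem_seg hiso g⁻¹ h
      rwa [smul_smul, smul_smul] at this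
  have hUne : (⋃ p : G × G, F p).Nonempty := by
    refine ⟨x₀, Set.mem_iUnion.2 ⟨(1, 1), ?_⟩⟩
    simp only [hF, one_smul, seg, Set.mem_setOf_eq, dist_self]
    ring
  have hcover : ⋃ p : G × G, F p = Set.univ := hmin _ hUne hUsub hUinv
  -- Baire category: some segment has nonempty interior
  obtain ⟨p, c, hc⟩ := nonempty_interior_of_iUnion_of_closed hclosed hcover
  obtain ⟨ε, hε, hball⟩ := Metric.mem_nhds_iff.1 (mem_interior_iff_mem_nhds.1 hc)
  set a := p.1 • x₀
  set b := p.2 • x₀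
  -- a branch point in that interior
  obtain ⟨b₀, hb₀⟩ := hbranch
  obtain ⟨q₀, hq₀orb, hq₀ball⟩ :=
    (hdense b₀).exists_mem_open Metric.isOpen_ball ⟨c, Metric.mem_ball_self hε⟩
  obtain ⟨g₀, hg₀⟩ := hq₀orb
  have hbp : IsBranchPoint q₀ := by rw [← hg₀]; exact isBranchPoint_smul hiso g₀ hb₀
  set δ := ε - dist c q₀ with hδdef
  have hδ : 0 < δ := by
    have := Metric.mem_ball.1 hq₀ball
    rw [dist_comm] at this
    simpa [hδdef] using sub_pos.2 this
  have hballq : Metric.ball q₀ δ ⊆ seg a b := by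
    refine Set.Subset.trans ?_ hball
    intro u hu
    have hu' : dist u q₀ < δ := Metric.mem_ball.1 hu
    have : dist u c ≤ dist u q₀ + dist q₀ c := dist_triangle u q₀ c
    have : dist u c < ε := by
      have e : dist q₀ c = dist c q₀ := dist_comm q₀ c
      linarith
    exact Metric.mem_ball.2 this
  have hq₀seg : q₀ ∈ seg a b := hball hq₀ball
  -- the geodesic parametrization of the segment
  obtain ⟨f, hf0, hfD, hfiso, hSeq⟩ := seg_eq_image hT a b
  set D := dist a b with hDdef
  obtain ⟨s₀, hs₀, hfs₀⟩ := hSeq ▸ hq₀seg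
  have hfcont : ContinuousOn f (Set.Icc 0 D) := by
    refine LipschitzOnWith.continuousOn (K := 1) ?_
    intro s hs t ht
    have : dist (f s) (f t) = dist s t := by rw [hfiso s hs t ht, Real.dist_eq]
    simp only [ENNReal.coe_one, one_mul, edist_dist, this]
    exact le_rfl
  -- each of the three branch directions contains a point of the segment near q₀
  have near : ∀ v : T, v ≠ q₀ → ∃ q : T, q ∈ connectedComponentIn {q₀}ᶜ v ∧ q ∈ seg a b := by
    intro v hv
    obtain ⟨h, hh0, hhD, hhiso⟩ := hT.1 q₀ v
    set D' := dist q₀ v with hD'def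
    have hD' : 0 < D' := dist_pos.2 fun e => hv e.symm
    have hhcont : ContinuousOn h (Set.Icc 0 D') := by
      refine LipschitzOnWith.continuousOn (K := 1) ?_
      intro s hs t ht
      have : dist (h s) (h t) = dist s t := by rw [hhiso s hs t ht, Real.dist_eq]
      simp only [ENNReal.coe_one, one_mul, edist_dist, this]
      exact le_rfl
    have hdist : ∀ t ∈ Set.Ioc (0:ℝ) D', dist q₀ (h t) = t := by
      intro t ht
      have h0m : (0:ℝ) ∈ Set.Icc (0:ℝ) D' := ⟨le_rfl, le_of_lt hD'⟩
      have htm : t ∈ Set.Icc (0:ℝ) D' := ⟨le_of_lt ht.1, ht.2⟩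
      have := hhiso 0 h0m t htm
      rw [hh0] at this
      rw [this, zero_sub, abs_neg, abs_of_nonneg (le_of_lt ht.1)]
    have hA : IsPreconnected (h '' Set.Ioc 0 D') :=
      isPreconnected_Ioc.image h (hhcont.mono Set.Ioc_subset_Icc_self)
    have hAc : h '' Set.Ioc 0 D' ⊆ {q₀}ᶜ := by
      rintro _ ⟨t, ht, rfl⟩
      intro he
      have := hdist t ht
      rw [Set.mem_singleton_iff.1 he] at this
      simp at this
      linarith [ht.1]
    have hvA : v ∈ h '' Set.Ioc 0 D' := ⟨D', ⟨hD', le_rfl⟩, hhD⟩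
    have hsub : h '' Set.Ioc 0 D' ⊆ connectedComponentIn {q₀}ᶜ v :=
      hA.subset_connectedComponentIn hvA hAc
    set t := min (δ / 2) D' with htdef
    have ht : t ∈ Set.Ioc (0:ℝ) D' := ⟨lt_min (by linarith) hD', min_le_right _ _⟩
    refine ⟨h t, hsub ⟨t, ht, rfl⟩, hballq ?_⟩
    rw [Metric.mem_ball, dist_comm, hdist t ht]
    calc t ≤ δ / 2 := min_le_left _ _
      _ < δ := by linarith
  -- the two halves of the segment around q₀
  set P₁ := f '' Set.Ico 0 s₀ with hP₁
  set P₂ := f '' Set.Ioc s₀ D with hP₂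
  have hne : ∀ u ∈ Set.Icc (0:ℝ) D, u ≠ s₀ → f u ≠ q₀ := by
    intro u hu hus he
    have := hfiso u hu s₀ hs₀
    rw [hfs₀, he, dist_self] at this
    exact hus (by have := abs_eq_zero.1 this.symm; linarith)
  have hP₁c : P₁ ⊆ {q₀}ᶜ := by
    rintro _ ⟨u, hu, rfl⟩
    exact hne u ⟨hu.1, le_of_lt (lt_of_lt_of_le hu.2 hs₀.2)⟩ (ne_of_lt hu.2)
  have hP₂c : P₂ ⊆ {q₀}ᶜ := by
    rintro _ ⟨u, hu, rfl⟩
    exact hne u ⟨le_trans hs₀.1 (le_of_lt hu.1), hu.2⟩ (ne_of_gt hu.1)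
  have hP₁conn : IsPreconnected P₁ :=
    isPreconnected_Ico.image f (hfcont.mono (Set.Ico_subset_Icc_self.trans
      (Set.Icc_subset_Icc le_rfl hs₀.2)))
  have hP₂conn : IsPreconnected P₂ :=
    isPreconnected_Ioc.image f (hfcont.mono (Set.Ioc_subset_Icc_self.trans
      (Set.Icc_subset_Icc hs₀.1 le_rfl)))
  have same : ∀ P : Set T, IsPreconnected P → P ⊆ {q₀}ᶜ → ∀ u ∈ P, ∀ v ∈ P,
      connectedComponentIn {q₀}ᶜ u = connectedComponentIn {q₀}ᶜ v := by
    intro P hP hPc u hu v hv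
    exact connectedComponentIn_eq ((hP.subset_connectedComponentIn hu hPc) hv)
  -- points of the segment other than q₀ lie in one of the two halves
  have split : ∀ q : T, q ∈ seg a b → q ∉ ({q₀} : Set T) → q ∈ P₁ ∨ q ∈ P₂ := by
    intro q hq hq'
    obtain ⟨u, hu, rfl⟩ := hSeq ▸ hq
    have hus : u ≠ s₀ := fun e => hq' (by rw [e]; exact hfs₀)
    rcases lt_or_gt_of_ne hus with h | h
    · exact Or.inl ⟨u, ⟨hu.1, h⟩, rfl⟩
    · exact Or.inr ⟨u, ⟨h, hu.2⟩, rfl⟩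
  -- now derive the contradiction from the three branch directions
  obtain ⟨y, z, w, hy, hz, hw, h1, h2, h3⟩ := hbp
  obtain ⟨qy, hqy, hqyseg⟩ := near y hy
  obtain ⟨qz, hqz, hqzseg⟩ := near z hz
  obtain ⟨qw, hqw, hqwseg⟩ := near w hw
  have eqy : connectedComponentIn {q₀}ᶜ qy = connectedComponentIn {q₀}ᶜ y :=
    (connectedComponentIn_eq hqy).symm
  have eqz : connectedComponentIn {q₀}ᶜ qz = connectedComponentIn {q₀}ᶜ z :=
    (connectedComponentIn_eq hqz).symm
  have eqw : connectedComponentIn {q₀}ᶜ qw = connectedComponentIn {q₀}ᶜ w :=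
    (connectedComponentIn_eq hqw).symm
  have hqy' : qy ∉ ({q₀} : Set T) := connectedComponentIn_subset _ _ hqy
  have hqz' : qz ∉ ({q₀} : Set T) := connectedComponentIn_subset _ _ hqz
  have hqw' : qw ∉ ({q₀} : Set T) := connectedComponentIn_subset _ _ hqw
  have collide : ∀ P : Set T, IsPreconnected P → P ⊆ {q₀}ᶜ →
      ∀ u v : T, u ∈ P → v ∈ P →
      connectedComponentIn {q₀}ᶜ u ≠ connectedComponentIn {q₀}ᶜ v → False := by
    intro P hP hPc u v hu hv hne'
    exact hne' (same P hP hPc u hu v hv)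
  rcases split qy hqyseg hqy' with hy1 | hy1 <;>
    rcases split qz hqzseg hqz' with hz1 | hz1 <;>
      rcases split qw hqwseg hqw' with hw1 | hw1
  · exact collide P₁ hP₁conn hP₁c qy qz hy1 hz1 (by rw [eqy, eqz]; exact h1)
  · exact collide P₁ hP₁conn hP₁c qy qz hy1 hz1 (by rw [eqy, eqz]; exact h1)
  · exact collide P₁ hP₁conn hP₁c qy qw hy1 hw1 (by rw [eqy, eqw]; exact h2)
  · exact collide P₂ hP₂conn hP₂c qz qw hz1 hw1 (by rw [eqz, eqw]; exact h3)
  · exact collide P₁ hP₁conn hP₁c qz qw hz1 hw1 (by rw [eqz, eqw]; exact h3)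
  · exact collide P₂ hP₂conn hP₂c qy qw hy1 hw1 (by rw [eqy, eqw]; exact h2)
  · exact collide P₂ hP₂conn hP₂c qy qz hy1 hz1 (by rw [eqy, eqz]; exact h1)
  · exact collide P₂ hP₂conn hP₂c qy qz hy1 hz1 (by rw [eqy, eqz]; exact h1)
end

section
/- Let T be an R-tree with a minimal isometric action of a group G with dense orbits and containing a branch point. Then the set of branch points of T is dense in T, and consequently every arc of T is nowhere dense in T. -/
open Pointwise

/-- Two points in a common connected subset of `C` have the same connected component in `C`. -/
private lemma cc_eq_of_connected {T : Type*} [TopologicalSpace T] {C S : Set T}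
    (hS : IsPreconnected S) (hSC : S ⊆ C) {u v : T} (hu : u ∈ S) (hv : v ∈ S) :
    connectedComponentIn C u = connectedComponentIn C v :=
  connectedComponentIn_eq (hS.subset_connectedComponentIn hu hSC hv)

/-- A map isometric on an interval is continuous on it. -/
private lemma contOn {T : Type*} [MetricSpace T] {f : ℝ → T} {a b : ℝ}
    (hf : ∀ s ∈ Set.Icc a b, ∀ t ∈ Set.Icc a b, dist (f s) (f t) = |s - t|) :
    ContinuousOn f (Set.Icc a b) := by
  have h : LipschitzOnWith 1 f (Set.Icc a b) := by
    rw [lipschitzOnWith_iff_dist_le_mul]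
    intro s hs t ht
    rw [hf s hs t ht, NNReal.coe_one, one_mul, Real.dist_eq]
  exact h.continuousOn

/-- Each direction at a point of an `ℝ`-tree is approached arbitrarily closely. -/
private lemma exists_near {T : Type*} [MetricSpace T] (hT : IsRTree T) {q y : T}
    (hy : y ≠ q) {δ : ℝ} (hδ : 0 < δ) :
    ∃ p : T, dist p q < δ ∧ p ≠ q ∧
      connectedComponentIn {q}ᶜ p = connectedComponentIn {q}ᶜ y := by
  obtain ⟨f, hf0, hfd, hf⟩ := hT.1 q y
  set d := dist q y with hd
  have hd0 : 0 < d := dist_pos.2 (Ne.symm hy)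
  set s := min δ d / 2 with hs
  have hmin : 0 < min δ d := lt_min hδ hd0
  have hs0 : 0 < s := by positivity
  have hsd : s ≤ d := by
    have := min_le_right δ d
    simp only [hs]; linarith
  have hsδ : s < δ := by
    have := min_le_left δ d
    simp only [hs]; linarith
  have hsub : Set.Icc s d ⊆ Set.Icc 0 d := Set.Icc_subset_Icc (le_of_lt hs0) le_rfl
  have hne : ∀ u ∈ Set.Icc s d, f u ≠ q := by
    intro u hu hq
    have h0 : (0:ℝ) ∈ Set.Icc (0:ℝ) d := ⟨le_rfl, le_of_lt hd0⟩
    have := hf u (hsub hu) 0 h0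
    rw [hq, hf0, dist_self] at this
    have : |u - 0| = 0 := this.symm
    rw [sub_zero, abs_eq_zero] at this
    exact absurd (this ▸ hu.1) (not_le.2 hs0)
  have hS : IsPreconnected (f '' Set.Icc s d) :=
    isPreconnected_Icc.image f ((contOn hf).mono hsub)
  have hSC : f '' Set.Icc s d ⊆ {q}ᶜ := by
    rintro _ ⟨u, hu, rfl⟩
    exact hne u hu
  have hmem_s : f s ∈ f '' Set.Icc s d := ⟨s, ⟨le_rfl, hsd⟩, rfl⟩
  have hmem_d : y ∈ f '' Set.Icc s d := ⟨d, ⟨hsd, le_rfl⟩, hfd⟩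
  refine ⟨f s, ?_, hne s ⟨le_rfl, hsd⟩, cc_eq_of_connected hS hSC hmem_s hmem_d⟩
  have h0 : (0:ℝ) ∈ Set.Icc (0:ℝ) d := ⟨le_rfl, le_of_lt hd0⟩
  have := hf s (hsub ⟨le_rfl, hsd⟩) 0 h0
  rw [hf0] at this
  rw [this, sub_zero, abs_of_pos hs0]
  exact hsδ

/-- Two points of an arc on the same side of a third point lie in the same component
of its complement. -/
private lemma arc_side {T : Type*} [MetricSpace T] {F : ℝ → T} {a b : ℝ}
    (hF : ∀ s ∈ Set.Icc a b, ∀ t ∈ Set.Icc a b, dist (F s) (F t) = |s - t|)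
    {t0 u v : ℝ} (ht0 : t0 ∈ Set.Icc a b) (hu : u ∈ Set.Icc a b) (hv : v ∈ Set.Icc a b)
    (hside : (u < t0 ∧ v < t0) ∨ (t0 < u ∧ t0 < v)) :
    connectedComponentIn {F t0}ᶜ (F u) = connectedComponentIn {F t0}ᶜ (F v) := by
  have hsub : Set.Icc (min u v) (max u v) ⊆ Set.Icc a b :=
    Set.Icc_subset_Icc (le_min hu.1 hv.1) (max_le hu.2 hv.2)
  have hS : IsPreconnected (F '' Set.Icc (min u v) (max u v)) :=
    isPreconnected_Icc.image F ((contOn hF).mono hsub)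
  have hSC : F '' Set.Icc (min u v) (max u v) ⊆ {F t0}ᶜ := by
    rintro _ ⟨w, hw, rfl⟩ hq
    have hwne : w ≠ t0 := by
      rcases hside with ⟨h1, h2⟩ | ⟨h1, h2⟩
      · intro h; subst h; exact absurd hw.2 (not_le.2 (max_lt h1 h2))
      · intro h; subst h; exact absurd hw.1 (not_le.2 (lt_min h1 h2))
    have := hF w (hsub hw) t0 ht0
    rw [Set.mem_singleton_iff.1 hq, dist_self] at this
    exact hwne (by rwa [eq_comm, abs_eq_zero, sub_eq_zero] at this)
  exact cc_eq_of_connected hS hSC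
    ⟨u, ⟨min_le_left u v, le_max_left u v⟩, rfl⟩
    ⟨v, ⟨min_le_right u v, le_max_right u v⟩, rfl⟩

/-- Translation by a group element acting by isometries, as a homeomorphism. -/
private def smulHomeo {G T : Type*} [Group G] [MulAction G T] [MetricSpace T]
    (hiso : ∀ g : G, Isometry fun x : T => g • x) (g : G) : T ≃ₜ T where
  toFun := fun x => g • x
  invFun := fun x => g⁻¹ • x
  left_inv := fun x => inv_smul_smul g x
  right_inv := fun x => smul_inv_smul g x
  continuous_toFun := (hiso g).continuous
  continuous_invFun := (hiso g⁻¹).continuous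

/-- Branch points are preserved by the action. -/
private lemma branch_smul {G T : Type*} [Group G] [MulAction G T] [MetricSpace T]
    (hiso : ∀ g : G, Isometry fun x : T => g • x) (g : G) {x : T}
    (hx : IsBranchPoint x) : IsBranchPoint (g • x) := by
  obtain ⟨y, z, w, hy, hz, hw, h1, h2, h3⟩ := hx
  set e := smulHomeo hiso g with he
  have himg : e '' ({x}ᶜ) = ({g • x}ᶜ : Set T) := by
    rw [Set.image_compl_eq e.bijective, Set.image_singleton]; rfl
  have key : ∀ p : T, p ≠ x →
      e '' connectedComponentIn {x}ᶜ p = connectedComponentIn ({g • x}ᶜ) (g • p) := by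
    intro p hp
    rw [← himg]
    exact e.image_connectedComponentIn hp
  have hinj : Function.Injective (Set.image e) := Set.image_injective.2 e.injective
  refine ⟨g • y, g • z, g • w,
    fun h => hy (MulAction.injective g h),
    fun h => hz (MulAction.injective g h),
    fun h => hw (MulAction.injective g h), ?_, ?_, ?_⟩
  · intro h; exact h1 (hinj (((key y hy).trans h).trans (key z hz).symm))
  · intro h; exact h2 (hinj (((key y hy).trans h).trans (key w hw).symm))
  · intro h; exact h3 (hinj (((key z hz).trans h).trans (key w hw).symm))

/-- In a minimal `F_N`-tree with dense orbits containing a branch point, branch points are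
dense and every arc is nowhere dense. -/
theorem dense_branchPoints_and_arcs_nowhereDense
    {T : Type*} [MetricSpace T] {N : ℕ} [MulAction (FreeGroup (Fin N)) T]
    (hT : IsRTree T) (hiso : ∀ g : FreeGroup (Fin N), Isometry fun x : T => g • x)
    (hmin : IsMinimalAction (FreeGroup (Fin N)) T)
    (hdense : ∀ x : T, Dense (MulAction.orbit (FreeGroup (Fin N)) x : Set T))
    (hbranch : ∃ x : T, IsBranchPoint x) :
    Dense {x : T | IsBranchPoint x} ∧ ∀ A : Set T, IsArc A → IsNowhereDense A := by
  obtain ⟨x0, hx0⟩ := hbranch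
  have hBdense : Dense {x : T | IsBranchPoint x} := by
    refine (hdense x0).mono ?_
    rintro _ ⟨g, rfl⟩
    exact branch_smul hiso g hx0
  refine ⟨hBdense, ?_⟩
  rintro A ⟨a, b, F, hab, hF, rfl⟩
  have hclosed : IsClosed (F '' Set.Icc a b) :=
    (isCompact_Icc.image_of_continuousOn (contOn hF)).isClosed
  rw [IsNowhereDense, hclosed.closure_eq, Set.eq_empty_iff_forall_notMem]
  intro p hp
  obtain ⟨q, hqB, hqI⟩ := hBdense.exists_mem_open isOpen_interior ⟨p, hp⟩
  obtain ⟨δ, hδ, hball⟩ := Metric.isOpen_iff.1 isOpen_interior q hqI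
  have hballA : Metric.ball q δ ⊆ F '' Set.Icc a b :=
    hball.trans interior_subset
  obtain ⟨t0, ht0m, ht0⟩ := hballA (Metric.mem_ball_self hδ)
  subst ht0
  obtain ⟨y, z, w, hy, hz, hw, h1, h2, h3⟩ := hqB
  obtain ⟨py, hpyd, hpyne, hpycc⟩ := exists_near hT hy hδ
  obtain ⟨pz, hpzd, hpzne, hpzcc⟩ := exists_near hT hz hδ
  obtain ⟨pw, hpwd, hpwne, hpwcc⟩ := exists_near hT hw hδ
  obtain ⟨uy, huym, hpyF⟩ := hballA (Metric.mem_ball.2 hpyd)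
  obtain ⟨uz, huzm, hpzF⟩ := hballA (Metric.mem_ball.2 hpzd)
  obtain ⟨uw, huwm, hpwF⟩ := hballA (Metric.mem_ball.2 hpwd)
  subst hpyF; subst hpzF; subst hpwF
  have huyne : uy ≠ t0 := fun h => hpyne (by rw [h])
  have huzne : uz ≠ t0 := fun h => hpzne (by rw [h])
  have huwne : uw ≠ t0 := fun h => hpwne (by rw [h])
  rcases lt_or_gt_of_ne huyne with hA | hA <;>
    rcases lt_or_gt_of_ne huzne with hB | hB <;>
      rcases lt_or_gt_of_ne huwne with hC | hC <;>
  first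
    | exact h1 (hpycc.symm.trans ((arc_side hF ht0m huym huzm (Or.inl ⟨hA, hB⟩)).symm.trans
        hpycc).symm.trans ((arc_side hF ht0m huym huzm (Or.inl ⟨hA, hB⟩)).trans hpzcc))
    | exact h1 (hpycc.symm.trans ((arc_side hF ht0m huym huzm (Or.inl ⟨hA, hB⟩)).trans hpzcc))
    | exact h1 (hpycc.symm.trans ((arc_side hF ht0m huym huzm (Or.inr ⟨hA, hB⟩)).trans hpzcc))
    | exact h2 (hpycc.symm.trans ((arc_side hF ht0m huym huwm (Or.inl ⟨hA, hC⟩)).trans hpwcc))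
    | exact h2 (hpycc.symm.trans ((arc_side hF ht0m huym huwm (Or.inr ⟨hA, hC⟩)).trans hpwcc))
    | exact h3 (hpzcc.symm.trans ((arc_side hF ht0m huzm huwm (Or.inl ⟨hB, hC⟩)).trans hpwcc))
    | exact h3 (hpzcc.symm.trans ((arc_side hF ht0m huzm huwm (Or.inr ⟨hB, hC⟩)).trans hpwcc))
end

section
/- Let F and F' be free factors of a finitely generated free group F_N. Then F ∩ F' is a free factor of both F and F'. -/
/-- `A` is a free factor of `B`: `A ≤ B` and there is `K ≤ B` such that `B` is the internal
free product of `A` and `K` (the natural map from the free product `A ∗ K` to `B` is an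
isomorphism). -/
def IsFreeFactorOf {G : Type*} [Group G] (A B : Subgroup G) : Prop :=
  ∃ (h : A ≤ B) (K : Subgroup G) (hK : K ≤ B),
    Function.Bijective ⇑(Monoid.Coprod.lift (Subgroup.inclusion h) (Subgroup.inclusion hK))

namespace Kurosh

open Function



/-- `Coprod.map` of two isomorphisms is bijective. -/
theorem coprod_map_bijective {M N M' N' : Type*} [Monoid M] [Monoid N] [Monoid M'] [Monoid N']
    (e₁ : M ≃* M') (e₂ : N ≃* N') :
    Function.Bijective ⇑(Monoid.Coprod.map e₁.toMonoidHom e₂.toMonoidHom) := by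
  have h₁ : (Monoid.Coprod.map e₁.symm.toMonoidHom e₂.symm.toMonoidHom).comp
      (Monoid.Coprod.map e₁.toMonoidHom e₂.toMonoidHom) = MonoidHom.id _ := by
    rw [Monoid.Coprod.map_comp_map]
    have a1 : e₁.symm.toMonoidHom.comp e₁.toMonoidHom = MonoidHom.id M := by ext x; simp
    have a2 : e₂.symm.toMonoidHom.comp e₂.toMonoidHom = MonoidHom.id N := by ext x; simp
    rw [a1, a2, Monoid.Coprod.map_id_id]
  have h₂ : (Monoid.Coprod.map e₁.toMonoidHom e₂.toMonoidHom).comp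
      (Monoid.Coprod.map e₁.symm.toMonoidHom e₂.symm.toMonoidHom) = MonoidHom.id _ := by
    rw [Monoid.Coprod.map_comp_map]
    have a1 : e₁.toMonoidHom.comp e₁.symm.toMonoidHom = MonoidHom.id M' := by ext x; simp
    have a2 : e₂.toMonoidHom.comp e₂.symm.toMonoidHom = MonoidHom.id N' := by ext x; simp
    rw [a1, a2, Monoid.Coprod.map_id_id]
  apply Function.bijective_iff_has_inverse.mpr
  refine ⟨⇑(Monoid.Coprod.map e₁.symm.toMonoidHom e₂.symm.toMonoidHom), ?_, ?_⟩
  · intro x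
    have := DFunLike.congr_fun h₁ x
    simpa only [MonoidHom.comp_apply, MonoidHom.id_apply] using this
  · intro x
    have := DFunLike.congr_fun h₂ x
    simpa only [MonoidHom.comp_apply, MonoidHom.id_apply] using this

/-- Transport of `IsFreeFactorOf` along a bijective homomorphism. -/
theorem isFreeFactorOf_map {G G' : Type*} [Group G] [Group G'] (ε : G →* G')
    (hε : Function.Bijective ε) {A B : Subgroup G} (hAB : IsFreeFactorOf A B) :
    IsFreeFactorOf (A.map ε) (B.map ε) := by
  obtain ⟨hle, K, hK, hbij⟩ := hAB
  refine ⟨Subgroup.map_mono hle, K.map ε, Subgroup.map_mono hK, ?_⟩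
  set eA := A.equivMapOfInjective ε hε.injective
  set eK := K.equivMapOfInjective ε hε.injective
  set eB := B.equivMapOfInjective ε hε.injective
  have comm : (Monoid.Coprod.lift (Subgroup.inclusion (Subgroup.map_mono hle))
        (Subgroup.inclusion (Subgroup.map_mono hK))).comp
        (Monoid.Coprod.map eA.toMonoidHom eK.toMonoidHom)
      = eB.toMonoidHom.comp (Monoid.Coprod.lift (Subgroup.inclusion hle)
        (Subgroup.inclusion hK)) := by
    apply Monoid.Coprod.hom_ext
    · ext x
      simp [eA, eB, Subgroup.coe_equivMapOfInjective_apply, Subgroup.coe_inclusion]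
    · ext x
      simp [eK, eB, Subgroup.coe_equivMapOfInjective_apply, Subgroup.coe_inclusion]
  have hmapbij := coprod_map_bijective eA eK
  have hcomp : Function.Bijective
      ⇑((Monoid.Coprod.lift (Subgroup.inclusion (Subgroup.map_mono hle))
        (Subgroup.inclusion (Subgroup.map_mono hK))).comp
        (Monoid.Coprod.map eA.toMonoidHom eK.toMonoidHom)) := by
    rw [comm]
    rw [MonoidHom.coe_comp]
    exact eB.bijective.comp hbij
  rw [MonoidHom.coe_comp] at hcomp
  exact (Function.Bijective.of_comp_iff _ hmapbij).mp hcomp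

/-- Build `IsFreeFactorOf` from ambient data. -/
theorem isFreeFactorOf_of_subtype {G : Type*} [Group G] {A L B : Subgroup G}
    (hA : A ≤ B) (hL : L ≤ B)
    (hinj : Function.Injective ⇑(Monoid.Coprod.lift A.subtype L.subtype))
    (hsup : A ⊔ L = B) : IsFreeFactorOf A B := by
  have comm : B.subtype.comp (Monoid.Coprod.lift (Subgroup.inclusion hA)
      (Subgroup.inclusion hL)) = Monoid.Coprod.lift A.subtype L.subtype := by
    apply Monoid.Coprod.hom_ext
    · rw [MonoidHom.comp_assoc]
      simp only [Monoid.Coprod.lift_comp_inl]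
      exact Subgroup.subtype_comp_inclusion hA
    · rw [MonoidHom.comp_assoc]
      simp only [Monoid.Coprod.lift_comp_inr]
      exact Subgroup.subtype_comp_inclusion hL
  refine ⟨hA, L, hL, ?_, ?_⟩
  · intro x y hxy
    apply hinj
    rw [← comm]
    simp only [MonoidHom.coe_comp, Function.comp_apply, hxy]
  · rintro ⟨b, hb⟩
    have hb' : b ∈ (Monoid.Coprod.lift A.subtype L.subtype).range := by
      rw [Monoid.Coprod.range_lift, Subgroup.range_subtype, Subgroup.range_subtype, hsup]
      exact hb
    obtain ⟨c, hc⟩ := hb'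
    refine ⟨c, ?_⟩
    apply Subtype.ext
    have hcc := DFunLike.congr_fun comm c
    simp only [MonoidHom.comp_apply] at hcc
    show B.subtype ((Monoid.Coprod.lift (Subgroup.inclusion hA) (Subgroup.inclusion hL)) c) = b
    rw [hcc, hc]



noncomputable section
open scoped Classical

universe u
variable {S T : Type u}

abbrev Amb (S T : Type u) := FreeGroup (S ⊕ T)

def inlHom (S T : Type u) : FreeGroup S →* Amb S T := FreeGroup.map Sum.inl

def Astd (S T : Type u) : Subgroup (Amb S T) := (inlHom S T).range

theorem inlHom_of (s : S) : inlHom S T (FreeGroup.of s) = FreeGroup.of (Sum.inl s) :=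
  FreeGroup.map.of

variable (H : Subgroup (Amb S T))

abbrev Xq := Amb S T ⧸ H

def bpt : Xq H := ((1 : Amb S T) : Xq H)

theorem smul_bpt (g : Amb S T) : g • bpt H = ((g : Amb S T) : Xq H) := by
  show g • ((1 : Amb S T) : Xq H) = _
  rw [MulAction.Quotient.smul_mk, smul_eq_mul, mul_one]

theorem smul_bpt_eq_bpt_iff {g : Amb S T} : g • bpt H = bpt H ↔ g ∈ H := by
  rw [smul_bpt]
  show (QuotientGroup.mk g = QuotientGroup.mk 1) ↔ _
  rw [QuotientGroup.eq]
  simp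

theorem exists_rep (x : Xq H) : ∃ g : Amb S T, g • bpt H = x := by
  induction x using QuotientGroup.induction_on with
  | H g => exact ⟨g, smul_bpt H g⟩

def XS : Set (Xq H) := {x | ∃ w : FreeGroup S, (inlHom S T w) • bpt H = x}

theorem bpt_mem_XS : bpt H ∈ XS H := ⟨1, by rw [map_one, one_smul]⟩

theorem XS_smul {x : Xq H} (hx : x ∈ XS H) (w : FreeGroup S) :
    (inlHom S T w) • x ∈ XS H := by
  obtain ⟨a, ha⟩ := hx
  exact ⟨w * a, by rw [map_mul, mul_smul, ha]⟩

theorem XS_smul_inv {x : Xq H} {w : FreeGroup S} (hx : (inlHom S T w) • x ∈ XS H) :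
    x ∈ XS H := by
  have := XS_smul H hx w⁻¹
  rwa [map_inv, inv_smul_smul] at this

theorem exists_d_bound (x : Xq H) : ∃ n, ∃ g : Amb S T, g • bpt H = x ∧ g.toWord.length ≤ n := by
  obtain ⟨g, hg⟩ := exists_rep H x
  exact ⟨g.toWord.length, g, hg, le_rfl⟩

def d (x : Xq H) : ℕ := Nat.find (exists_d_bound H x)

theorem d_spec (x : Xq H) : ∃ g : Amb S T, g • bpt H = x ∧ g.toWord.length ≤ d H x :=
  Nat.find_spec (exists_d_bound H x)

theorem d_min {x : Xq H} {g : Amb S T} (hg : g • bpt H = x) : d H x ≤ g.toWord.length :=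
  Nat.find_le ⟨g, hg, le_rfl⟩

theorem exists_dS_bound {x : Xq H} (hx : x ∈ XS H) :
    ∃ n, ∃ w : FreeGroup S, (inlHom S T w) • bpt H = x ∧ w.toWord.length ≤ n := by
  obtain ⟨w, hw⟩ := hx
  exact ⟨w.toWord.length, w, hw, le_rfl⟩

def dS (x : Xq H) : ℕ :=
  if hx : x ∈ XS H then Nat.find (exists_dS_bound H hx) else 0

theorem dS_spec {x : Xq H} (hx : x ∈ XS H) :
    ∃ w : FreeGroup S, (inlHom S T w) • bpt H = x ∧ w.toWord.length ≤ dS H x := by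
  rw [dS, dif_pos hx]
  exact Nat.find_spec (exists_dS_bound H hx)

theorem dS_min {x : Xq H} (hx : x ∈ XS H) {w : FreeGroup S}
    (hw : (inlHom S T w) • bpt H = x) : dS H x ≤ w.toWord.length := by
  rw [dS, dif_pos hx]
  exact Nat.find_le ⟨w, hw, le_rfl⟩

def rank (x : Xq H) : ℕ × ℕ := if x ∈ XS H then (0, dS H x) else (1, d H x)

def rk : Xq H → Xq H → Prop := fun y x =>
  Prod.Lex (· < ·) (· < ·) (rank H y) (rank H x)

theorem rk_wf : WellFounded (rk H) :=
  InvImage.wf _ (WellFounded.prod_lex wellFounded_lt wellFounded_lt)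

theorem letter_decomp {α : Type*} [DecidableEq α] (g : FreeGroup α) (hg : g ≠ 1) :
    ∃ (g₀ g' : FreeGroup α), (∃ a : α, g₀ = FreeGroup.of a ∨ g₀ = (FreeGroup.of a)⁻¹) ∧
      g = g₀ * g' ∧ g'.toWord.length < g.toWord.length := by
  cases hL : g.toWord with
  | nil => exact absurd (FreeGroup.toWord_eq_nil_iff.mp hL) hg
  | cons head tail =>
    refine ⟨FreeGroup.mk [head], FreeGroup.mk tail, ?_, ?_, ?_⟩
    · obtain ⟨a, b⟩ := head
      cases b
      · refine ⟨a, Or.inr ?_⟩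
        show FreeGroup.mk [(a, false)] = (FreeGroup.mk [(a, true)])⁻¹
        rw [FreeGroup.inv_mk]
        rfl
      · exact ⟨a, Or.inl rfl⟩
    · rw [FreeGroup.mul_mk]
      conv_lhs => rw [← FreeGroup.mk_toWord (x := g)]
      rw [hL]
      rfl
    · rw [FreeGroup.toWord_mk]
      exact Nat.lt_succ_of_le (FreeGroup.Red.length_le FreeGroup.reduce.red)

def ParentSpec (x : Xq H) (p : Amb S T × Xq H) : Prop :=
  (∃ σ : S ⊕ T, p.1 = FreeGroup.of σ ∨ p.1 = (FreeGroup.of σ)⁻¹) ∧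
  x = p.1 • p.2 ∧ rk H p.2 x ∧
  (x ∈ XS H → (∃ s : S, p.1 = FreeGroup.of (Sum.inl s) ∨ p.1 = (FreeGroup.of (Sum.inl s))⁻¹)
    ∧ p.2 ∈ XS H)

theorem exists_parent (x : Xq H) (hx : x ≠ bpt H) : ∃ p, ParentSpec H x p := by
  by_cases hxS : x ∈ XS H
  · obtain ⟨w, hwx, hwlen⟩ := dS_spec H hxS
    have hw1 : w ≠ 1 := by
      rintro rfl
      rw [map_one, one_smul] at hwx
      exact hx hwx.symm
    obtain ⟨g₀, w', ⟨s, hs⟩, hdec, hlt⟩ := letter_decomp w hw1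
    refine ⟨(inlHom S T g₀, (inlHom S T w') • bpt H), ?_, ?_, ?_, ?_⟩
    · refine ⟨Sum.inl s, ?_⟩
      rcases hs with hs | hs <;> rw [hs] <;>
        simp [inlHom, FreeGroup.map.of]
    · show x = (inlHom S T g₀) • ((inlHom S T w') • bpt H)
      rw [← mul_smul, ← map_mul, ← hdec, hwx]
    · have hyS : (inlHom S T w') • bpt H ∈ XS H := ⟨w', rfl⟩
      show Prod.Lex _ _ _ _
      rw [rank, if_pos hyS, rank, if_pos hxS]
      refine Prod.Lex.right _ ?_
      calc dS H _ ≤ w'.toWord.length := dS_min H hyS rfl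
        _ < w.toWord.length := hlt
        _ ≤ dS H x := hwlen
    · intro _
      refine ⟨⟨s, ?_⟩, ⟨w', rfl⟩⟩
      rcases hs with hs | hs <;> rw [hs] <;>
        simp [inlHom, FreeGroup.map.of]
  · obtain ⟨g, hgx, hglen⟩ := d_spec H x
    have hg1 : g ≠ 1 := by
      rintro rfl
      rw [one_smul] at hgx
      exact hx hgx.symm
    obtain ⟨g₀, g', hlet, hdec, hlt⟩ := letter_decomp g hg1
    refine ⟨(g₀, g' • bpt H), hlet, ?_, ?_, ?_⟩
    · show x = g₀ • (g' • bpt H)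
      rw [← mul_smul, ← hdec, hgx]
    · show Prod.Lex _ _ _ _
      rw [rank, rank, if_neg hxS]
      by_cases hyS : g' • bpt H ∈ XS H
      · rw [if_pos hyS]
        exact Prod.Lex.left _ _ (by norm_num)
      · rw [if_neg hyS]
        refine Prod.Lex.right _ ?_
        calc d H _ ≤ g'.toWord.length := d_min H rfl
          _ < g.toWord.length := hlt
          _ ≤ d H x := hglen
    · intro hc
      exact absurd hc hxS

def parent (x : Xq H) (hx : x ≠ bpt H) : Amb S T × Xq H :=
  Classical.choose (exists_parent H x hx)

theorem parent_spec (x : Xq H) (hx : x ≠ bpt H) : ParentSpec H x (parent H x hx) :=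
  Classical.choose_spec (exists_parent H x hx)

def t : Xq H → Amb S T :=
  (rk_wf H).fix (fun x IH =>
    if hx : x = bpt H then 1 else (parent H x hx).1 * IH (parent H x hx).2
      ((parent_spec H x hx).2.2.1))

theorem t_eq (x : Xq H) : t H x =
    if hx : x = bpt H then 1 else (parent H x hx).1 * t H (parent H x hx).2 := by
  rw [t, WellFounded.fix_eq]

theorem t_bpt : t H (bpt H) = 1 := by rw [t_eq, dif_pos rfl]

theorem t_smul (x : Xq H) : t H x • bpt H = x := by
  induction x using (rk_wf H).induction with
  | _ x IH =>
    rw [t_eq]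
    by_cases hx : x = bpt H
    · rw [dif_pos hx, one_smul, hx]
    · rw [dif_neg hx, mul_smul, IH _ ((parent_spec H x hx).2.2.1),
        ← (parent_spec H x hx).2.1]

theorem t_mem_XS {x : Xq H} (hx : x ∈ XS H) : t H x ∈ Astd S T := by
  induction x using (rk_wf H).induction with
  | _ x IH =>
    rw [t_eq]
    by_cases hxb : x = bpt H
    · rw [dif_pos hxb]; exact one_mem _
    · rw [dif_neg hxb]
      obtain ⟨⟨s, hs⟩, hyS⟩ := (parent_spec H x hxb).2.2.2 hx
      refine mul_mem ?_ (IH _ ((parent_spec H x hxb).2.2.1) hyS)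
      rcases hs with hs | hs <;> rw [hs]
      · exact ⟨FreeGroup.of s, by rw [inlHom, FreeGroup.map.of]⟩
      · exact inv_mem ⟨FreeGroup.of s, by rw [inlHom, FreeGroup.map.of]⟩

def genv (p : (S ⊕ T) × Xq H) : Amb S T :=
  (t H p.2)⁻¹ * FreeGroup.of p.1 * t H ((FreeGroup.of p.1)⁻¹ • p.2)

theorem genv_mem (p : (S ⊕ T) × Xq H) : genv H p ∈ H := by
  rw [← smul_bpt_eq_bpt_iff, genv, mul_smul, mul_smul, t_smul, smul_inv_smul]
  rw [inv_smul_eq_iff, t_smul]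

def EdgeT := {p : (S ⊕ T) × Xq H // genv H p ≠ 1}

def fletter (σ : S ⊕ T) (z : Xq H) : FreeGroup (EdgeT H) :=
  if h : genv H (σ, z) = 1 then 1 else FreeGroup.of ⟨(σ, z), h⟩

def permAut : Equiv.Perm (Xq H) →* MulAut (Xq H → FreeGroup (EdgeT H)) where
  toFun π :=
    { toFun := fun n => n ∘ π.symm
      invFun := fun n => n ∘ π
      left_inv := fun n => by funext z; simp
      right_inv := fun n => by funext z; simp
      map_mul' := fun n₁ n₂ => rfl }
  map_one' := by
    apply MulEquiv.ext; intro n; rfl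
  map_mul' := fun π₁ π₂ => by
    apply MulEquiv.ext; intro n; rfl

def Wgp := (Xq H → FreeGroup (EdgeT H)) ⋊[permAut H] Equiv.Perm (Xq H)

instance : Group (Wgp H) := SemidirectProduct.instGroup

def act : Amb S T →* Equiv.Perm (Xq H) := MulAction.toPermHom _ _

def Psi : Amb S T →* Wgp H :=
  FreeGroup.lift (fun σ => (⟨fletter H σ, act H (FreeGroup.of σ)⟩ : Wgp H))

theorem Psi_right (g : Amb S T) :
    (Psi H g).right = act H g := by
  have : (SemidirectProduct.rightHom.comp (Psi H)) = act H := by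
    apply FreeGroup.ext_hom
    intro σ
    show SemidirectProduct.rightHom (Psi H (FreeGroup.of σ)) = _
    rw [Psi]
    erw [FreeGroup.lift_apply_of]
  exact DFunLike.congr_fun this g

theorem Psi_cocycle (g₁ g₂ : Amb S T) (x : Xq H) :
    (Psi H (g₁ * g₂)).left x = (Psi H g₁).left x * (Psi H g₂).left (g₁⁻¹ • x) := by
  rw [map_mul]
  erw [SemidirectProduct.mul_left, Pi.mul_apply]
  congr 1
  show ((Psi H g₂).left ∘ ((Psi H g₁).right).symm) x = _
  rw [comp_apply, Psi_right]
  rfl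

theorem Psi_of_left (σ : S ⊕ T) : (Psi H (FreeGroup.of σ)).left = fletter H σ := by
  rw [Psi]
  erw [FreeGroup.lift_apply_of]

theorem Psi_one_left (x : Xq H) : (Psi H 1).left x = 1 := by
  rw [map_one]; rfl

theorem Psi_inv_left (u : Amb S T) (x : Xq H) :
    (Psi H u⁻¹).left x = ((Psi H u).left (u • x))⁻¹ := by
  have h := Psi_cocycle H u⁻¹ u x
  rw [inv_mul_cancel, Psi_one_left, inv_inv] at h
  exact eq_inv_of_mul_eq_one_left h.symm


theorem Psi_t_left (x : Xq H) : (Psi H (t H x)).left x = 1 := by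
  induction x using (rk_wf H).induction with
  | _ x IH =>
    by_cases hx : x = bpt H
    · rw [t_eq, dif_pos hx, Psi_one_left]
    · have hps := parent_spec H x hx
      obtain ⟨σ, hσ⟩ := hps.1
      have hxy : x = (parent H x hx).1 • (parent H x hx).2 := hps.2.1
      have hyx : (parent H x hx).1⁻¹ • x = (parent H x hx).2 :=
        inv_smul_eq_iff.mpr hxy
      rw [t_eq, dif_neg hx, Psi_cocycle, hyx, IH _ hps.2.2.1, mul_one]
      rcases hσ with hσ | hσ
      · have hg : genv H (σ, x) = 1 := by
          have hσx : (FreeGroup.of σ)⁻¹ • x = (parent H x hx).2 := by rw [← hσ]; exact hyx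
          rw [genv]
          show (t H x)⁻¹ * FreeGroup.of σ * t H ((FreeGroup.of σ)⁻¹ • x) = 1
          rw [hσx, t_eq H x, dif_neg hx, hσ]
          group
        rw [hσ, Psi_of_left, fletter, dif_pos hg]
      · have hσx : FreeGroup.of σ • x = (parent H x hx).2 := by
          rw [← hyx, hσ, inv_inv]
        have hg : genv H (σ, (parent H x hx).2) = 1 := by
          rw [genv]
          show (t H (parent H x hx).2)⁻¹ * FreeGroup.of σ *
            t H ((FreeGroup.of σ)⁻¹ • (parent H x hx).2) = 1
          have h2 : (FreeGroup.of σ)⁻¹ • (parent H x hx).2 = x := by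
            rw [← hσ, ← hxy]
          rw [h2, t_eq H x, dif_neg hx, hσ]
          group
        rw [hσ, Psi_inv_left, hσx, Psi_of_left, fletter, dif_pos hg, inv_one]

def Phi : ↥H →* FreeGroup (EdgeT H) :=
  MonoidHom.mk' (fun h => (Psi H ↑h).left (bpt H)) (by
    intro h₁ h₂
    have hb : ((h₁ : Amb S T))⁻¹ • bpt H = bpt H :=
      (smul_bpt_eq_bpt_iff H).mpr (inv_mem h₁.2)
    show (Psi H ((h₁ : Amb S T) * (h₂ : Amb S T))).left (bpt H) = _
    rw [Psi_cocycle, hb])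

def lam : FreeGroup (EdgeT H) →* ↥H :=
  FreeGroup.lift (fun e => (⟨genv H e.1, genv_mem H e.1⟩ : ↥H))

theorem Psi_genv_left (p : (S ⊕ T) × Xq H) :
    (Psi H (genv H p)).left (bpt H) = fletter H p.1 p.2 := by
  obtain ⟨σ, z⟩ := p
  rw [genv]
  show (Psi H ((t H z)⁻¹ * FreeGroup.of σ * t H ((FreeGroup.of σ)⁻¹ • z))).left (bpt H) = _
  rw [mul_assoc, Psi_cocycle, Psi_inv_left, inv_inv, t_smul, Psi_t_left, inv_one, one_mul,
    Psi_cocycle, Psi_of_left, Psi_t_left, mul_one]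

theorem Phi_lam_comp : (Phi H).comp (lam H) = MonoidHom.id _ := by
  apply FreeGroup.ext_hom
  intro e
  obtain ⟨⟨σ, z⟩, he⟩ := e
  show Phi H (lam H (FreeGroup.of ⟨(σ, z), he⟩)) = FreeGroup.of ⟨(σ, z), he⟩
  rw [lam]
  erw [FreeGroup.lift_apply_of]
  show (Psi H (genv H (σ, z))).left (bpt H) = _
  rw [Psi_genv_left, fletter, dif_neg he]

def Rgen : Subgroup (Amb S T) := (H.subtype.comp (lam H)).range

theorem tele_mem (g : Amb S T) : ∀ z : Xq H, (t H (g • z))⁻¹ * g * t H z ∈ Rgen H := by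
  refine FreeGroup.induction_on g ?_ ?_ ?_ ?_
  · intro z
    rw [one_smul]
    have h1 : (t H z)⁻¹ * 1 * t H z = 1 := by group
    rw [h1]
    exact one_mem _
  · intro σ z
    show (t H (FreeGroup.of σ • z))⁻¹ * FreeGroup.of σ * t H z ∈ Rgen H
    have hz : (FreeGroup.of σ)⁻¹ • (FreeGroup.of σ • z) = z := inv_smul_smul _ _
    have hexpr : (t H (FreeGroup.of σ • z))⁻¹ * FreeGroup.of σ * t H z
        = genv H (σ, FreeGroup.of σ • z) := by
      rw [genv]
      show _ = (t H (FreeGroup.of σ • z))⁻¹ * FreeGroup.of σ *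
        t H ((FreeGroup.of σ)⁻¹ • (FreeGroup.of σ • z))
      rw [hz]
    rw [hexpr]
    by_cases hg : genv H (σ, FreeGroup.of σ • z) = 1
    · rw [hg]; exact one_mem _
    · refine ⟨FreeGroup.of ⟨(σ, FreeGroup.of σ • z), hg⟩, ?_⟩
      rw [lam]
      erw [FreeGroup.lift_apply_of]
  · intro σ ih z
    show (t H ((FreeGroup.of σ)⁻¹ • z))⁻¹ * (FreeGroup.of σ)⁻¹ * t H z ∈ Rgen H
    have ih' : ∀ z : Xq H, (t H (FreeGroup.of σ • z))⁻¹ * FreeGroup.of σ * t H z ∈ Rgen H := ih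
    have h := ih' ((FreeGroup.of σ)⁻¹ • z)
    rw [smul_inv_smul] at h
    have hexpr : (t H ((FreeGroup.of σ)⁻¹ • z))⁻¹ * (FreeGroup.of σ)⁻¹ * t H z
        = ((t H z)⁻¹ * FreeGroup.of σ * t H ((FreeGroup.of σ)⁻¹ • z))⁻¹ := by group
    rw [hexpr]
    exact inv_mem h
  · intro g₁ g₂ ih₁ ih₂ z
    have hexpr : (t H ((g₁ * g₂) • z))⁻¹ * (g₁ * g₂) * t H z
        = ((t H (g₁ • (g₂ • z)))⁻¹ * g₁ * t H (g₂ • z)) *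
          ((t H (g₂ • z))⁻¹ * g₂ * t H z) := by
      rw [mul_smul]; group
    rw [hexpr]
    exact mul_mem (ih₁ _) (ih₂ _)

theorem mem_Rgen_of_mem {h : Amb S T} (hh : h ∈ H) : h ∈ Rgen H := by
  have h1 : h • bpt H = bpt H := (smul_bpt_eq_bpt_iff H).mpr hh
  have h2 := tele_mem H h (bpt H)
  rw [h1, t_bpt] at h2
  simpa using h2

theorem lam_surjective : Function.Surjective (lam H) := by
  intro h
  obtain ⟨w, hw⟩ := MonoidHom.mem_range.mp (mem_Rgen_of_mem H h.2)
  exact ⟨w, Subtype.ext hw⟩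

theorem lam_injective : Function.Injective (lam H) := by
  intro a b hab
  have ha := DFunLike.congr_fun (Phi_lam_comp H) a
  have hb := DFunLike.congr_fun (Phi_lam_comp H) b
  simp only [MonoidHom.comp_apply, MonoidHom.id_apply] at ha hb
  rw [← ha, ← hb, hab]


def PS (e : EdgeT H) : Prop := (∃ s : S, e.1.1 = Sum.inl s) ∧ e.1.2 ∈ XS H

def E1 := {e : EdgeT H // PS H e}
def E2 := {e : EdgeT H // ¬ PS H e}

def j1 : FreeGroup (E1 H) →* FreeGroup (EdgeT H) := FreeGroup.map Subtype.val
def j2 : FreeGroup (E2 H) →* FreeGroup (EdgeT H) := FreeGroup.map Subtype.val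

def mu : FreeGroup (EdgeT H) →* Amb S T := H.subtype.comp (lam H)

theorem mu_injective : Function.Injective (mu H) := by
  rw [mu, MonoidHom.coe_comp]
  exact (Subgroup.subtype_injective H).comp (lam_injective H)

theorem mu_of (e : EdgeT H) : mu H (FreeGroup.of e) = genv H e.1 := by
  rw [mu, MonoidHom.comp_apply, lam, FreeGroup.lift_apply_of]
  rfl

def A0 : Subgroup (Amb S T) := ((mu H).comp (j1 H)).range
def L0 : Subgroup (Amb S T) := ((mu H).comp (j2 H)).range

theorem m1_of (e : E1 H) : ((mu H).comp (j1 H)) (FreeGroup.of e) = genv H e.1.1 := by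
  rw [MonoidHom.comp_apply, j1]
  erw [FreeGroup.map.of, mu_of]

theorem m2_of (e : E2 H) : ((mu H).comp (j2 H)) (FreeGroup.of e) = genv H e.1.1 := by
  rw [MonoidHom.comp_apply, j2]
  erw [FreeGroup.map.of, mu_of]

theorem claim_S (w : FreeGroup S) :
    ∀ z : Xq H, z ∈ XS H → (t H ((inlHom S T w) • z))⁻¹ * inlHom S T w * t H z ∈ A0 H := by
  refine FreeGroup.induction_on w ?_ ?_ ?_ ?_
  · intro z _
    rw [map_one, one_smul]
    have h1 : (t H z)⁻¹ * 1 * t H z = 1 := by group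
    rw [h1]
    exact one_mem _
  · intro s z hz
    show (t H (inlHom S T (FreeGroup.of s) • z))⁻¹ * inlHom S T (FreeGroup.of s) * t H z ∈ A0 H
    rw [inlHom_of]
    have hz' : (FreeGroup.of (Sum.inl s) : Amb S T) • z ∈ XS H := by
      have := XS_smul H hz (FreeGroup.of s)
      rwa [inlHom_of] at this
    have hzz : ((FreeGroup.of (Sum.inl s) : Amb S T))⁻¹ • ((FreeGroup.of (Sum.inl s) : Amb S T) • z) = z :=
      inv_smul_smul _ _
    have hexpr : (t H ((FreeGroup.of (Sum.inl s) : Amb S T) • z))⁻¹ * FreeGroup.of (Sum.inl s) * t H z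
        = genv H (Sum.inl s, (FreeGroup.of (Sum.inl s) : Amb S T) • z) := by
      rw [genv]
      show _ = (t H ((FreeGroup.of (Sum.inl s) : Amb S T) • z))⁻¹ * FreeGroup.of (Sum.inl s) *
        t H (((FreeGroup.of (Sum.inl s) : Amb S T))⁻¹ • ((FreeGroup.of (Sum.inl s) : Amb S T) • z))
      rw [hzz]
    rw [hexpr]
    by_cases hg : genv H (Sum.inl s, (FreeGroup.of (Sum.inl s) : Amb S T) • z) = 1
    · rw [hg]; exact one_mem _
    · refine ⟨FreeGroup.of ⟨⟨(Sum.inl s, (FreeGroup.of (Sum.inl s) : Amb S T) • z), hg⟩, ⟨⟨s, rfl⟩, hz'⟩⟩, ?_⟩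
      exact m1_of H _
  · intro s ih z hz
    have ih' : ∀ z : Xq H, z ∈ XS H →
        (t H (inlHom S T (FreeGroup.of s) • z))⁻¹ * inlHom S T (FreeGroup.of s) * t H z
          ∈ A0 H := ih
    show (t H (inlHom S T ((FreeGroup.of s)⁻¹) • z))⁻¹ * inlHom S T ((FreeGroup.of s)⁻¹) * t H z
      ∈ A0 H
    rw [map_inv]
    have hz' : (inlHom S T (FreeGroup.of s))⁻¹ • z ∈ XS H := by
      rw [← map_inv]; exact XS_smul H hz _
    have h := ih' _ hz'
    rw [smul_inv_smul] at h
    have hexpr : (t H ((inlHom S T (FreeGroup.of s))⁻¹ • z))⁻¹ * (inlHom S T (FreeGroup.of s))⁻¹ * t H z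
        = ((t H z)⁻¹ * inlHom S T (FreeGroup.of s) * t H ((inlHom S T (FreeGroup.of s))⁻¹ • z))⁻¹ := by
      group
    rw [hexpr]
    exact inv_mem h
  · intro w₁ w₂ ih₁ ih₂ z hz
    have hz2 : inlHom S T w₂ • z ∈ XS H := XS_smul H hz _
    have hexpr : (t H ((inlHom S T (w₁ * w₂)) • z))⁻¹ * inlHom S T (w₁ * w₂) * t H z
        = ((t H (inlHom S T w₁ • (inlHom S T w₂ • z)))⁻¹ * inlHom S T w₁ *
            t H (inlHom S T w₂ • z)) *
          ((t H (inlHom S T w₂ • z))⁻¹ * inlHom S T w₂ * t H z) := by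
      rw [map_mul, mul_smul]; group
    rw [hexpr]
    exact mul_mem (ih₁ _ hz2) (ih₂ _ hz)

theorem A0_le : A0 H ≤ Astd S T ⊓ H := by
  rintro x ⟨u, rfl⟩
  induction u using FreeGroup.induction_on with
  | C1 => rw [map_one]; exact one_mem _
  | of e =>
    show ((mu H).comp (j1 H)) (FreeGroup.of e) ∈ _
    rw [m1_of]
    obtain ⟨⟨p, hp⟩, ⟨s, hs⟩, hzS⟩ := e
    refine ⟨?_, genv_mem H _⟩
    show genv H p ∈ Astd S T
    obtain ⟨σ, z⟩ := p
    rw [genv]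
    simp only at hs hzS ⊢
    subst hs
    have h1 : t H z ∈ Astd S T := t_mem_XS H hzS
    have h2 : (FreeGroup.of (Sum.inl s) : Amb S T) ∈ Astd S T :=
      ⟨FreeGroup.of s, inlHom_of s⟩
    have h3 : t H (((FreeGroup.of (Sum.inl s) : Amb S T))⁻¹ • z) ∈ Astd S T := by
      apply t_mem_XS
      have h4 := XS_smul H hzS ((FreeGroup.of s)⁻¹)
      rw [map_inv, inlHom_of] at h4
      exact h4
    exact mul_mem (mul_mem (inv_mem h1) h2) h3
  | inv_of e ih =>
    rw [map_inv]
    exact inv_mem ih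
  | mul u v ihu ihv =>
    rw [map_mul]
    exact mul_mem ihu ihv

theorem le_A0 : Astd S T ⊓ H ≤ A0 H := by
  rintro x ⟨⟨w, hwx⟩, hxH⟩
  have h := claim_S H w (bpt H) (bpt_mem_XS H)
  rw [hwx, (smul_bpt_eq_bpt_iff H).mpr hxH, t_bpt] at h
  simpa using h

theorem A0_eq : A0 H = Astd S T ⊓ H := le_antisymm (A0_le H) (le_A0 H)

theorem A0_le_H : A0 H ≤ H := fun x hx => ((A0_le H) hx).2

theorem mu_mem (u : FreeGroup (EdgeT H)) : mu H u ∈ H := (lam H u).2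

theorem L0_le_H : L0 H ≤ H := by
  rintro x ⟨u, rfl⟩
  exact mu_mem H _


theorem coprod_map_surjective {A B A' B' : Type*} [Monoid A] [Monoid B] [Monoid A'] [Monoid B']
    {f : A →* A'} {g : B →* B'} (hf : Function.Surjective f) (hg : Function.Surjective g) :
    Function.Surjective ⇑(Monoid.Coprod.map f g) := by
  intro x
  induction x using Monoid.Coprod.induction_on with
  | inl a =>
    obtain ⟨a', rfl⟩ := hf a
    exact ⟨Monoid.Coprod.inl a', by rw [Monoid.Coprod.map_apply_inl]⟩
  | inr b =>
    obtain ⟨b', rfl⟩ := hg b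
    exact ⟨Monoid.Coprod.inr b', by rw [Monoid.Coprod.map_apply_inr]⟩
  | mul x y ihx ihy =>
    obtain ⟨x', hx'⟩ := ihx
    obtain ⟨y', hy'⟩ := ihy
    exact ⟨x' * y', by rw [map_mul, hx', hy']⟩

theorem Rgen_le_sup : Rgen H ≤ A0 H ⊔ L0 H := by
  rintro x ⟨u, rfl⟩
  show mu H u ∈ A0 H ⊔ L0 H
  induction u using FreeGroup.induction_on with
  | C1 => rw [map_one]; exact one_mem _
  | of e =>
    show mu H (FreeGroup.of e) ∈ _
    by_cases hPS : PS H e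
    · apply Subgroup.mem_sup_left
      refine ⟨FreeGroup.of (⟨e, hPS⟩ : E1 H), ?_⟩
      erw [m1_of]
    · apply Subgroup.mem_sup_right
      refine ⟨FreeGroup.of (⟨e, hPS⟩ : E2 H), ?_⟩
      erw [m2_of]
  | inv_of e ih =>
    show mu H (FreeGroup.of e)⁻¹ ∈ _
    rw [map_inv]
    exact inv_mem ih
  | mul a b iha ihb =>
    rw [map_mul]
    exact mul_mem iha ihb

theorem sup_eq : A0 H ⊔ L0 H = H := by
  apply le_antisymm
  · exact sup_le (A0_le_H H) (L0_le_H H)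
  · intro h hh
    exact Rgen_le_sup H (mem_Rgen_of_mem H hh)

def kap2 : Monoid.Coprod (FreeGroup (E1 H)) (FreeGroup (E2 H)) →* FreeGroup (EdgeT H) :=
  Monoid.Coprod.lift (j1 H) (j2 H)

def rho2 : FreeGroup (EdgeT H) →* Monoid.Coprod (FreeGroup (E1 H)) (FreeGroup (E2 H)) :=
  FreeGroup.lift (fun e => if h : PS H e then Monoid.Coprod.inl (FreeGroup.of (⟨e, h⟩ : E1 H))
    else Monoid.Coprod.inr (FreeGroup.of (⟨e, h⟩ : E2 H)))

theorem rho2_kap2 : (rho2 H).comp (kap2 H) = MonoidHom.id _ := by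
  apply Monoid.Coprod.hom_ext
  · apply FreeGroup.ext_hom
    intro e
    show rho2 H (kap2 H (Monoid.Coprod.inl (FreeGroup.of e)))
      = Monoid.Coprod.inl (FreeGroup.of e)
    erw [kap2, Monoid.Coprod.lift_apply_inl, j1, FreeGroup.map.of, rho2, FreeGroup.lift_apply_of,
      dif_pos e.2, Subtype.coe_eta]
  · apply FreeGroup.ext_hom
    intro e
    show rho2 H (kap2 H (Monoid.Coprod.inr (FreeGroup.of e)))
      = Monoid.Coprod.inr (FreeGroup.of e)
    erw [kap2, Monoid.Coprod.lift_apply_inr, j2, FreeGroup.map.of, rho2, FreeGroup.lift_apply_of,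
      dif_neg e.2, Subtype.coe_eta]

theorem kap2_injective : Function.Injective ⇑(kap2 H) := by
  intro a b hab
  have ha := DFunLike.congr_fun (rho2_kap2 H) a
  have hb := DFunLike.congr_fun (rho2_kap2 H) b
  simp only [MonoidHom.comp_apply, MonoidHom.id_apply] at ha hb
  rw [← ha, ← hb, hab]

theorem lift_subtype_injective :
    Function.Injective ⇑(Monoid.Coprod.lift (A0 H).subtype (L0 H).subtype) := by
  have hcomm : (Monoid.Coprod.lift (A0 H).subtype (L0 H).subtype).comp
      (Monoid.Coprod.map ((mu H).comp (j1 H)).rangeRestrict ((mu H).comp (j2 H)).rangeRestrict)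
      = (mu H).comp (kap2 H) := by
    apply Monoid.Coprod.hom_ext
    · erw [MonoidHom.comp_assoc, Monoid.Coprod.map_comp_inl, ← MonoidHom.comp_assoc,
        Monoid.Coprod.lift_comp_inl]
    · erw [MonoidHom.comp_assoc, Monoid.Coprod.map_comp_inr, ← MonoidHom.comp_assoc,
        Monoid.Coprod.lift_comp_inr]
  have hinj : Function.Injective ⇑((mu H).comp (kap2 H)) := by
    rw [MonoidHom.coe_comp]
    exact (mu_injective H).comp (kap2_injective H)
  have hsurj : Function.Surjective
      ⇑(Monoid.Coprod.map ((mu H).comp (j1 H)).rangeRestrict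
        ((mu H).comp (j2 H)).rangeRestrict) :=
    coprod_map_surjective (MonoidHom.rangeRestrict_surjective _)
      (MonoidHom.rangeRestrict_surjective _)
  intro a b hab
  obtain ⟨a', rfl⟩ := hsurj a
  obtain ⟨b', rfl⟩ := hsurj b
  have ha := DFunLike.congr_fun hcomm a'
  have hb := DFunLike.congr_fun hcomm b'
  simp only [MonoidHom.comp_apply] at ha hb
  have : ((mu H).comp (kap2 H)) a' = ((mu H).comp (kap2 H)) b' := by
    simp only [MonoidHom.comp_apply]
    rw [← ha, ← hb]
    exact hab
  rw [hinj this]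


theorem main (H : Subgroup (Amb S T)) : IsFreeFactorOf (Astd S T ⊓ H) H := by
  rw [← A0_eq]
  exact isFreeFactorOf_of_subtype (A0_le_H H) (L0_le_H H) (lift_subtype_injective H) (sup_eq H)

end
section SumIso
variable {S T : Type*}

def sumRho : FreeGroup (S ⊕ T) →* Monoid.Coprod (FreeGroup S) (FreeGroup T) :=
  FreeGroup.lift (Sum.elim (fun s => Monoid.Coprod.inl (FreeGroup.of s))
    (fun t => Monoid.Coprod.inr (FreeGroup.of t)))

def sumKappa : Monoid.Coprod (FreeGroup S) (FreeGroup T) →* FreeGroup (S ⊕ T) :=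
  Monoid.Coprod.lift (FreeGroup.map Sum.inl) (FreeGroup.map Sum.inr)

theorem kappa_rho : (sumKappa (S := S) (T := T)).comp sumRho = MonoidHom.id _ := by
  apply FreeGroup.ext_hom
  intro a
  cases a <;>
    simp [sumRho, sumKappa, FreeGroup.lift_apply_of, FreeGroup.map.of]

theorem rho_kappa : (sumRho (S := S) (T := T)).comp sumKappa = MonoidHom.id _ := by
  apply Monoid.Coprod.hom_ext
  · apply FreeGroup.ext_hom
    intro s
    simp [sumRho, sumKappa, FreeGroup.lift_apply_of, FreeGroup.map.of]
  · apply FreeGroup.ext_hom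
    intro t
    simp [sumRho, sumKappa, FreeGroup.lift_apply_of, FreeGroup.map.of]

theorem sumRho_bijective : Function.Bijective (sumRho (S := S) (T := T)) := by
  apply Function.bijective_iff_has_inverse.mpr
  refine ⟨⇑(sumKappa), ?_, ?_⟩
  · intro x
    have := DFunLike.congr_fun (kappa_rho (S := S) (T := T)) x
    simpa only [MonoidHom.comp_apply, MonoidHom.id_apply] using this
  · intro x
    have := DFunLike.congr_fun (rho_kappa (S := S) (T := T)) x
    simpa only [MonoidHom.comp_apply, MonoidHom.id_apply] using this

end SumIso

/-- From a free factor `F` of a free group `G`, get an adapted basis: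
an isomorphism `FreeGroup (S ⊕ T) ≃ G` carrying the standard factor onto `F`. -/
theorem exists_adapted {G : Type u} [Group G] [IsFreeGroup G] {F : Subgroup G}
    (h : IsFreeFactorOf F ⊤) :
    ∃ (S T : Type u) (ε : FreeGroup (S ⊕ T) →* G), Function.Bijective ⇑ε ∧
      Subgroup.map ε (Astd S T) = F := by
  obtain ⟨hle, K, hK, hbij⟩ := h
  refine ⟨IsFreeGroup.Generators ↥F, IsFreeGroup.Generators ↥K, ?_, ?_, ?_⟩
  rotate_left
  pick_goal 3
  · exact Subgroup.topEquiv.toMonoidHom.comp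
      ((Monoid.Coprod.lift (Subgroup.inclusion hle) (Subgroup.inclusion hK)).comp
        ((Monoid.Coprod.map (IsFreeGroup.toFreeGroup ↥F).symm.toMonoidHom
          (IsFreeGroup.toFreeGroup ↥K).symm.toMonoidHom).comp sumRho))
  · simp only [MonoidHom.coe_comp]
    exact Subgroup.topEquiv.bijective.comp (hbij.comp
      ((coprod_map_bijective _ _).comp sumRho_bijective))
  · set eF := (IsFreeGroup.toFreeGroup ↥F).symm
    set eK := (IsFreeGroup.toFreeGroup ↥K).symm
    set ε := Subgroup.topEquiv.toMonoidHom.comp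
      ((Monoid.Coprod.lift (Subgroup.inclusion hle) (Subgroup.inclusion hK)).comp
        ((Monoid.Coprod.map eF.toMonoidHom eK.toMonoidHom).comp sumRho)) with hε
    have key : ε.comp (inlHom _ _) = F.subtype.comp eF.toMonoidHom := by
      apply FreeGroup.ext_hom
      intro s
      rw [MonoidHom.comp_apply, inlHom_of]
      simp only [hε, MonoidHom.comp_apply, sumRho, FreeGroup.lift_apply_of,
        Sum.elim_inl, Monoid.Coprod.map_apply_inl, Monoid.Coprod.lift_apply_inl]
      rfl
    have hr : (eF.toMonoidHom).range = ⊤ := MonoidHom.range_eq_top.mpr eF.surjective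
    show Subgroup.map ε ((inlHom _ _).range) = F
    rw [← MonoidHom.range_comp, key, MonoidHom.range_comp, hr, ← MonoidHom.range_eq_map,
      Subgroup.range_subtype]


end Kurosh

/-- The intersection of two free factors of a finitely generated free group is a free factor
of each of them. -/
theorem inf_isFreeFactorOf {N : ℕ} (F F' : Subgroup (FreeGroup (Fin N)))
    (h : IsFreeFactorOf F ⊤) (h' : IsFreeFactorOf F' ⊤) :
    IsFreeFactorOf (F ⊓ F') F ∧ IsFreeFactorOf (F ⊓ F') F' := by
  constructor
  · obtain ⟨S, T, ε, hε, hmap⟩ := Kurosh.exists_adapted h'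
    have hmain := Kurosh.main (Subgroup.comap ε F)
    have hthis := Kurosh.isFreeFactorOf_map ε hε hmain
    rw [Subgroup.map_inf _ _ ε hε.injective, hmap,
      Subgroup.map_comap_eq_self_of_surjective hε.surjective] at hthis
    rwa [inf_comm] at hthis
  · obtain ⟨S, T, ε, hε, hmap⟩ := Kurosh.exists_adapted h
    have hmain := Kurosh.main (Subgroup.comap ε F')
    have hthis := Kurosh.isFreeFactorOf_map ε hε hmain
    rwa [Subgroup.map_inf _ _ ε hε.injective, hmap,
      Subgroup.map_comap_eq_self_of_surjective hε.surjective] at hthis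
end

section
/- Let T be an R-tree with an isometric action of F_N that is mixing. If T is not indecomposable, then every transverse covering of T consists of exactly one F_N-orbit of subtrees. -/
open Pointwise

/-- Mixing: every arc `J` is covered by finitely many translates of any given arc `I`. -/
def IsMixing (G : Type*) (T : Type*) [Group G] [MulAction G T] [MetricSpace T] : Prop :=
  ∀ I J : Set T, IsArc I → IsArc J → ∃ (r : ℕ) (g : Fin r → G), J ⊆ ⋃ i, g i • I

/-- Indecomposable: mixing, with the covering translates forming a chain in which
consecutive translates overlap in a nondegenerate set. -/
def IsIndecomposable (G : Type*) (T : Type*) [Group G] [MulAction G T] [MetricSpace T] : Prop :=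
  ∀ I J : Set T, IsArc I → IsArc J →
    ∃ (r : ℕ) (g : Fin (r + 1) → G), J ⊆ ⋃ i, g i • I ∧
      ∀ i : Fin r, ¬(g i.castSucc • I ∩ g i.succ • I).Subsingleton

/-- A transverse covering: a transverse family of closed subtrees such that every arc of `T`
is covered by finitely many members. -/
structure IsTransverseCovering (G : Type*) {T : Type*} [Group G] [MulAction G T]
    [MetricSpace T] (F : Set (Set T)) extends IsTransverseFamily G F : Prop where
  closed : ∀ Y ∈ F, IsClosed Y
  covers : ∀ A : Set T, IsArc A →
    ∃ (r : ℕ) (Ys : Fin r → Set T), (∀ i, Ys i ∈ F) ∧ A ⊆ ⋃ i, Ys i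


private lemma arc_in_subtree {T : Type*} [MetricSpace T] (hT : IsRTree T)
    {Y : Set T} (hsub : IsSubtree Y) {x y : T} (hx : x ∈ Y) (hy : y ∈ Y) (hxy : x ≠ y) :
    ∃ I : Set T, IsArc I ∧ I ⊆ Y ∧ I.Infinite := by
  obtain ⟨f, hf0, hfd, hiso⟩ := hT.1 x y
  have hd : 0 < dist x y := dist_pos.mpr hxy
  refine ⟨f '' Set.Icc 0 (dist x y), ⟨0, dist x y, f, hd, hiso, rfl⟩, ?_, ?_⟩
  · rintro _ ⟨s, hs, rfl⟩
    apply hsub x hx y hy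
    show dist x (f s) + dist (f s) y = dist x y
    have h1 : dist x (f s) = |0 - s| := by
      rw [← hf0]; exact hiso 0 ⟨le_refl _, hd.le⟩ s hs
    have h2 : dist (f s) y = |s - dist x y| := by
      have := hiso s hs (dist x y) ⟨hd.le, le_refl _⟩
      rwa [hfd] at this
    rw [h1, h2, abs_of_nonpos (by linarith [hs.1]), abs_of_nonpos (by linarith [hs.2])]
    ring
  · apply Set.Infinite.image ?_ (Set.Icc_infinite hd)
    intro s hs t ht hst
    have h := hiso s hs t ht
    rw [hst, dist_self] at h
    have := h.symm
    rwa [abs_eq_zero, sub_eq_zero] at this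

/-- If a mixing `F_N`-tree is not indecomposable, then every transverse covering of it
consists of exactly one `F_N`-orbit of subtrees. -/
theorem transverseCovering_single_orbit_of_mixing_not_indecomposable
    {T : Type*} [MetricSpace T] {N : ℕ} [MulAction (FreeGroup (Fin N)) T]
    (hT : IsRTree T) (hiso : ∀ g : FreeGroup (Fin N), Isometry fun x : T => g • x)
    (hmix : IsMixing (FreeGroup (Fin N)) T)
    (hnotind : ¬IsIndecomposable (FreeGroup (Fin N)) T) :
    ∀ F : Set (Set T), IsTransverseCovering (FreeGroup (Fin N)) F →
      ∀ Y ∈ F, ∀ Y' ∈ F, ∃ g : FreeGroup (Fin N), g • Y = Y' := by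
  intro F hF Y hY Y' hY'
  obtain ⟨x, hx, y, hy, hxy⟩ := Set.not_subsingleton_iff.mp (hF.nondeg Y hY)
  obtain ⟨x', hx', y', hy', hxy'⟩ := Set.not_subsingleton_iff.mp (hF.nondeg Y' hY')
  obtain ⟨I, hIarc, hIY, _⟩ := arc_in_subtree hT (hF.subtree Y hY) hx hy hxy
  obtain ⟨J, hJarc, hJY', hJinf⟩ := arc_in_subtree hT (hF.subtree Y' hY') hx' hy' hxy'
  obtain ⟨r, g, hcov⟩ := hmix I J hIarc hJarc
  by_contra hno
  push_neg at hno
  have hsub : J ⊆ ⋃ i, (g i • Y ∩ Y') := by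
    intro z hz
    obtain ⟨i, hzi⟩ := Set.mem_iUnion.mp (hcov hz)
    exact Set.mem_iUnion.mpr ⟨i, Set.smul_set_mono hIY hzi, hJY' hz⟩
  have hfin : (⋃ i, (g i • Y ∩ Y')).Finite := by
    apply Set.finite_iUnion
    intro i
    exact Set.Subsingleton.finite
      (hF.transverse _ (hF.invariant (g i) Y hY) Y' hY' (hno (g i)))
  exact hJinf (hfin.subset hsub)
end

section
/- Let T be an R-tree with an isometric action of a finitely generated group G, and suppose the action is minimal. Then T contains a finite supporting subtree: there exists a finite subtree K ⊆ T (a finite union of arcs) such that every arc I ⊆ T is contained in a finite union of G-translates of K. Explicitly, for any point x ∈ T, the convex hull of {x} ∪ {s·x : s ∈ S ∪ S^{-1}} for a finite generating set S works. -/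
open Pointwise

/-- A finite subtree: a finite union of (possibly degenerate) arcs, i.e. of segments. -/
def IsFiniteSubtree {T : Type*} [MetricSpace T] (K : Set T) : Prop :=
  ∃ (n : ℕ) (p q : Fin n → T), K = ⋃ i, seg (p i) (q i)

/-- A supporting subtree: every arc of `T` is covered by finitely many `G`-translates. -/
def IsSupporting (G : Type*) {T : Type*} [Group G] [MulAction G T] [MetricSpace T]
    (K : Set T) : Prop :=
  ∀ A : Set T, IsArc A → ∃ (r : ℕ) (g : Fin r → G), A ⊆ ⋃ i, g i • K

section RTreeAux

variable {T : Type*} [MetricSpace T]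

lemma RT.left_mem_seg (x y : T) : x ∈ seg x y := by simp [seg]

lemma RT.right_mem_seg (x y : T) : y ∈ seg x y := by simp [seg]

lemma RT.seg_symm (x y : T) : seg x y = seg y x := by
  ext z
  simp only [seg, Set.mem_setOf_eq]
  rw [dist_comm x z, dist_comm z y, dist_comm x y]
  constructor <;> intro h <;> linarith

lemma RT.seg_trans {x y z w : T} (hz : z ∈ seg x y) (hw : w ∈ seg x z) : w ∈ seg x y := by
  simp only [seg, Set.mem_setOf_eq] at *
  have h1 := dist_triangle w z y
  have h2 := dist_triangle x w y
  linarith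

/-- In a `0`-hyperbolic space, the segment `[p,q]` is contained in `[p,m] ∪ [m,q]`. -/
lemma RT.seg_subset_union
    (h4 : ∀ x y z w : T, dist x y + dist z w ≤ max (dist x z + dist y w) (dist x w + dist y z))
    (p q m : T) : seg p q ⊆ seg p m ∪ seg m q := by
  intro z hz
  simp only [seg, Set.mem_setOf_eq] at hz
  have h := h4 p q z m
  have c1 : dist z m = dist m z := dist_comm z m
  have c2 : dist q m = dist m q := dist_comm q m
  have c3 : dist q z = dist z q := dist_comm q z
  rcases max_choice (dist p z + dist q m) (dist p m + dist q z) with hm | hm <;> rw [hm] at h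
  · right
    have h5 := dist_triangle m z q
    simp only [seg, Set.mem_setOf_eq]
    linarith
  · left
    have h5 := dist_triangle p z m
    simp only [seg, Set.mem_setOf_eq]
    linarith

variable {G : Type*} [Group G] [MulAction G T]

lemma RT.dist_smul_eq (hiso : ∀ g : G, Isometry fun x : T => g • x) (g : G) (a b : T) :
    dist (g • a) (g • b) = dist a b := (hiso g).dist_eq a b

lemma RT.smul_seg (hiso : ∀ g : G, Isometry fun x : T => g • x) (g : G) (a b : T) :
    g • seg a b = seg (g • a) (g • b) := by
  ext z
  rw [Set.mem_smul_set_iff_inv_smul_mem]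
  simp only [seg, Set.mem_setOf_eq]
  have h1 : dist a (g⁻¹ • z) = dist (g • a) z := by
    rw [← RT.dist_smul_eq hiso g a (g⁻¹ • z), smul_inv_smul]
  have h2 : dist (g⁻¹ • z) b = dist z (g • b) := by
    rw [← RT.dist_smul_eq hiso g (g⁻¹ • z) b, smul_inv_smul]
  rw [h1, h2, RT.dist_smul_eq hiso g a b]

lemma RT.isSubtree_smul (hiso : ∀ g : G, Isometry fun x : T => g • x)
    {Y : Set T} (hY : IsSubtree Y) (g : G) : IsSubtree (g • Y) := by
  intro p hp q hq z hz
  rw [Set.mem_smul_set_iff_inv_smul_mem] at hp hq ⊢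
  refine hY _ hp _ hq ?_
  have h := RT.smul_seg hiso g⁻¹ p q
  rw [← h]
  exact Set.smul_mem_smul_set hz

end RTreeAux

/-- In a minimal `ℝ`-tree with an isometric action of a finitely generated group, the convex
hull of a point together with its images under a symmetric generating set is a finite
supporting subtree; in particular a finite supporting subtree exists. -/
theorem exists_finite_supporting_subtree
    {T G : Type*} [MetricSpace T] [Group G] [MulAction G T]
    (hT : IsRTree T) (hiso : ∀ g : G, Isometry fun x : T => g • x)
    (hmin : IsMinimalAction G T)
    (S : Finset G) (hgen : Subgroup.closure (S : Set G) = ⊤) (x : T) :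
    IsSubtree (⋂₀ {Y : Set T | IsSubtree Y ∧
        insert x ((fun s : G => s • x) '' ((S : Set G) ∪ (S : Set G)⁻¹)) ⊆ Y}) ∧
      IsFiniteSubtree (⋂₀ {Y : Set T | IsSubtree Y ∧
        insert x ((fun s : G => s • x) '' ((S : Set G) ∪ (S : Set G)⁻¹)) ⊆ Y}) ∧
      IsSupporting G (⋂₀ {Y : Set T | IsSubtree Y ∧
        insert x ((fun s : G => s • x) '' ((S : Set G) ∪ (S : Set G)⁻¹)) ⊆ Y}) := by
  classical
  have h4 := hT.2
  set F : Set T := insert x ((fun s : G => s • x) '' ((S : Set G) ∪ (S : Set G)⁻¹)) with hF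
  set K : Set T := ⋂₀ {Y : Set T | IsSubtree Y ∧ F ⊆ Y} with hKdef
  -- K is a subtree
  have hKsub : IsSubtree K := by
    intro p hp q hq z hz
    rw [hKdef, Set.mem_sInter]
    intro Y hY
    exact hY.1 p (hp Y hY) q (hq Y hY) hz
  -- F ⊆ K
  have hFK : F ⊆ K := by
    intro a ha
    rw [hKdef, Set.mem_sInter]
    intro Y hY
    exact hY.2 ha
  have hxK : x ∈ K := hFK (Set.mem_insert _ _)
  -- segments from x to elements of F are in K
  have hsegK : ∀ a ∈ F, seg x a ⊆ K := fun a ha => hKsub x hxK a (hFK ha)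
  -- F is finite
  have hFfin : F.Finite := by
    apply Set.Finite.insert
    apply Set.Finite.image
    exact S.finite_toSet.union S.finite_toSet.inv
  refine ⟨hKsub, ?_, ?_⟩
  -- Part 2 : K is a finite subtree
  · obtain ⟨n, e, hrange⟩ := hFfin.fin_embedding
    refine ⟨n, fun _ => x, fun i => e i, ?_⟩
    apply Set.Subset.antisymm
    · -- K ⊆ union of segments: the union is a subtree containing F
      have hUsub : IsSubtree (⋃ i, seg x (e i)) := by
        intro p hp q hq
        rw [Set.mem_iUnion] at hp hq
        obtain ⟨i, hp⟩ := hp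
        obtain ⟨j, hq⟩ := hq
        intro z hz
        rcases RT.seg_subset_union h4 p q x hz with h | h
        · exact Set.mem_iUnion.2 ⟨i, RT.seg_trans hp (RT.seg_symm p x ▸ h)⟩
        · exact Set.mem_iUnion.2 ⟨j, RT.seg_trans hq h⟩
      have hFU : F ⊆ ⋃ i, seg x (e i) := by
        intro a ha
        rw [← hrange] at ha
        obtain ⟨i, rfl⟩ := ha
        exact Set.mem_iUnion.2 ⟨i, RT.right_mem_seg _ _⟩
      exact Set.sInter_subset_of_mem ⟨hUsub, hFU⟩
    · -- each segment is in K
      refine Set.iUnion_subset fun i => ?_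
      apply hsegK
      rw [← hrange]
      exact ⟨i, rfl⟩
  -- Part 3 : K is supporting
  · -- "covered by finitely many translates" as a predicate
    set Cov : Set T → Prop := fun A => ∃ gs : Finset G, A ⊆ ⋃ g ∈ gs, g • K with hCov
    have cov_mono : ∀ {A B : Set T}, A ⊆ B → Cov B → Cov A := by
      rintro A B hAB ⟨gs, hgs⟩; exact ⟨gs, hAB.trans hgs⟩
    have cov_union : ∀ {A B : Set T}, Cov A → Cov B → Cov (A ∪ B) := by
      rintro A B ⟨gs, hgs⟩ ⟨gs', hgs'⟩
      refine ⟨gs ∪ gs', Set.union_subset (hgs.trans ?_) (hgs'.trans ?_)⟩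
      · intro z hz
        rw [Set.mem_iUnion₂] at hz ⊢
        obtain ⟨g, hg, h⟩ := hz
        exact ⟨g, Finset.mem_union_left _ hg, h⟩
      · intro z hz
        rw [Set.mem_iUnion₂] at hz ⊢
        obtain ⟨g, hg, h⟩ := hz
        exact ⟨g, Finset.mem_union_right _ hg, h⟩
    have cov_single : ∀ (g : G) {A : Set T}, A ⊆ g • K → Cov A := by
      intro g A hA
      refine ⟨{g}, hA.trans ?_⟩
      intro z hz
      exact Set.mem_biUnion (Finset.mem_singleton_self g) hz
    have cov_smul : ∀ (g : G) {A : Set T}, Cov A → Cov (g • A) := by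
      rintro g A ⟨gs, hgs⟩
      refine ⟨gs.image (fun h => g * h), ?_⟩
      intro z hz
      rw [Set.mem_smul_set_iff_inv_smul_mem] at hz
      have := hgs hz
      rw [Set.mem_iUnion₂] at this ⊢
      obtain ⟨h, hh, hzh⟩ := this
      refine ⟨g * h, Finset.mem_image_of_mem _ hh, ?_⟩
      rw [Set.mem_smul_set_iff_inv_smul_mem] at hzh ⊢
      rw [mul_inv_rev, mul_smul]
      exact hzh
    -- the word lemma
    have hword : ∀ L : List G, (∀ s ∈ L, s ∈ (S : Set G) ∪ (S : Set G)⁻¹) →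
        Cov (seg x (L.prod • x)) := by
      intro L
      induction L with
      | nil =>
        intro _
        refine cov_single 1 ?_
        intro z hz
        have hzx : z = x := by
          simp only [seg, List.prod_nil, one_smul, dist_self, Set.mem_setOf_eq] at hz
          have h1 := dist_nonneg (x := x) (y := z)
          have h2 := dist_nonneg (x := z) (y := x)
          have : dist x z = 0 := by linarith
          exact (dist_eq_zero.mp this).symm
        rw [hzx, one_smul]
        exact hxK
      | cons s L ih =>
        intro hmem
        have hs : s ∈ (S : Set G) ∪ (S : Set G)⁻¹ := hmem s List.mem_cons_self
        have hL : ∀ t ∈ L, t ∈ (S : Set G) ∪ (S : Set G)⁻¹ :=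
          fun t ht => hmem t (List.mem_cons_of_mem s ht)
        have hsplit : seg x ((s :: L).prod • x) ⊆
            seg x (s • x) ∪ seg (s • x) ((s :: L).prod • x) :=
          RT.seg_subset_union h4 _ _ _
        refine cov_mono hsplit (cov_union ?_ ?_)
        · exact cov_single 1 (by rw [one_smul]; exact hsegK _ (Set.mem_insert_of_mem _ ⟨s, hs, rfl⟩))
        · have heq : seg (s • x) ((s :: L).prod • x) = s • seg x (L.prod • x) := by
            rw [RT.smul_seg hiso, List.prod_cons, mul_smul]
          rw [heq]
          exact cov_smul s (ih hL)
    -- segments between translates of x are covered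
    have hcov_x : ∀ g h : G, Cov (seg (g • x) (h • x)) := by
      intro g h
      have hmem : g⁻¹ * h ∈ Subgroup.closure (S : Set G) := by rw [hgen]; trivial
      rw [← Subgroup.mem_toSubmonoid, Subgroup.closure_toSubmonoid] at hmem
      obtain ⟨L, hL, hprod⟩ := Submonoid.exists_list_of_mem_closure hmem
      have heq : seg (g • x) (h • x) = g • seg x (L.prod • x) := by
        rw [RT.smul_seg hiso, hprod, ← mul_smul, mul_inv_cancel_left]
      rw [heq]
      exact cov_smul g (hword L hL)
    -- W = union of all translates of K is everything
    set W : Set T := ⋃ g : G, g • K with hWdef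
    have hKW : ∀ g : G, g • K ⊆ W := fun g => Set.subset_iUnion (fun g : G => g • K) g
    have hcovW : ∀ {A : Set T}, Cov A → A ⊆ W := by
      rintro A ⟨gs, hgs⟩
      refine hgs.trans ?_
      refine Set.iUnion₂_subset fun g _ => hKW g
    have hsegW : ∀ (g h : G) (p q : T), p ∈ g • K → q ∈ h • K → seg p q ⊆ W := by
      intro g h p q hp hq
      have hgx : g • x ∈ g • K := Set.smul_mem_smul_set hxK
      have hhx : h • x ∈ h • K := Set.smul_mem_smul_set hxK
      have hgKsub : IsSubtree (g • K) := RT.isSubtree_smul hiso hKsub g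
      have hhKsub : IsSubtree (h • K) := RT.isSubtree_smul hiso hKsub h
      have step1 : seg p q ⊆ seg p (g • x) ∪ seg (g • x) q := RT.seg_subset_union h4 _ _ _
      have step2 : seg (g • x) q ⊆ seg (g • x) (h • x) ∪ seg (h • x) q :=
        RT.seg_subset_union h4 _ _ _
      refine step1.trans (Set.union_subset ?_ (step2.trans (Set.union_subset ?_ ?_)))
      · exact (hgKsub p hp (g • x) hgx).trans (hKW g)
      · exact hcovW (hcov_x g h)
      · exact (hhKsub (h • x) hhx q hq).trans (hKW h)
    have hWsub : IsSubtree W := by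
      intro p hp q hq
      rw [hWdef, Set.mem_iUnion] at hp hq
      obtain ⟨g, hp⟩ := hp
      obtain ⟨h, hq⟩ := hq
      exact hsegW g h p q hp hq
    have hWinv : ∀ g : G, g • W = W := by
      intro g
      apply Set.Subset.antisymm
      · intro z hz
        rw [Set.mem_smul_set_iff_inv_smul_mem, hWdef, Set.mem_iUnion] at hz
        obtain ⟨h, hz⟩ := hz
        rw [Set.mem_smul_set_iff_inv_smul_mem] at hz
        refine Set.mem_iUnion.2 ⟨g * h, ?_⟩
        rw [Set.mem_smul_set_iff_inv_smul_mem, mul_inv_rev, mul_smul]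
        exact hz
      · intro z hz
        rw [Set.mem_iUnion] at hz
        obtain ⟨h, hz⟩ := hz
        rw [Set.mem_smul_set_iff_inv_smul_mem] at hz
        rw [Set.mem_smul_set_iff_inv_smul_mem, Set.mem_iUnion]
        refine ⟨g⁻¹ * h, ?_⟩
        rw [Set.mem_smul_set_iff_inv_smul_mem, mul_inv_rev, mul_smul, inv_inv, smul_inv_smul]
        exact hz
    have hWne : W.Nonempty := ⟨x, Set.mem_iUnion.2 ⟨1, by rw [one_smul]; exact hxK⟩⟩
    have hWuniv : W = Set.univ := hmin W hWne hWsub hWinv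
    -- every segment is covered
    have hcov_seg : ∀ u v : T, Cov (seg u v) := by
      intro u v
      have hu : u ∈ W := hWuniv ▸ Set.mem_univ u
      have hv : v ∈ W := hWuniv ▸ Set.mem_univ v
      rw [hWdef, Set.mem_iUnion] at hu hv
      obtain ⟨g, hu⟩ := hu
      obtain ⟨h, hv⟩ := hv
      have hgx : g • x ∈ g • K := Set.smul_mem_smul_set hxK
      have hhx : h • x ∈ h • K := Set.smul_mem_smul_set hxK
      have hgKsub : IsSubtree (g • K) := RT.isSubtree_smul hiso hKsub g
      have hhKsub : IsSubtree (h • K) := RT.isSubtree_smul hiso hKsub h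
      have step1 : seg u v ⊆ seg u (g • x) ∪ seg (g • x) v := RT.seg_subset_union h4 _ _ _
      have step2 : seg (g • x) v ⊆ seg (g • x) (h • x) ∪ seg (h • x) v :=
        RT.seg_subset_union h4 _ _ _
      refine cov_mono step1 (cov_union ?_ (cov_mono step2 (cov_union ?_ ?_)))
      · exact cov_single g (hgKsub u hu (g • x) hgx)
      · exact hcov_x g h
      · exact cov_single h (hhKsub (h • x) hhx v hv)
    -- conclude
    intro A hA
    obtain ⟨a, b, f, hab, hfiso, hAeq⟩ := hA
    have hAseg : A ⊆ seg (f a) (f b) := by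
      intro z hz
      rw [hAeq] at hz
      obtain ⟨t, ht, rfl⟩ := hz
      have haa : a ∈ Set.Icc a b := Set.left_mem_Icc.2 hab.le
      have hbb : b ∈ Set.Icc a b := Set.right_mem_Icc.2 hab.le
      have h1 := hfiso a haa t ht
      have h2 := hfiso t ht a haa
      have h3 := hfiso t ht b hbb
      have h4' := hfiso a haa b hbb
      simp only [seg, Set.mem_setOf_eq]
      rw [h1, h3, h4']
      rw [abs_of_nonpos (by linarith [ht.1, ht.2] : a - t ≤ 0),
        abs_of_nonpos (by linarith [ht.1, ht.2] : t - b ≤ 0),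
        abs_of_nonpos (by linarith : a - b ≤ 0)]
      ring
    obtain ⟨gs, hgs⟩ := cov_mono hAseg (hcov_seg (f a) (f b))
    refine ⟨gs.card, fun i => (gs.equivFin.symm i : G), ?_⟩
    refine hgs.trans ?_
    intro z hz
    rw [Set.mem_iUnion₂] at hz
    obtain ⟨g, hg, hzg⟩ := hz
    rw [Set.mem_iUnion]
    exact ⟨gs.equivFin ⟨g, hg⟩, by simpa using hzg⟩
end

section
/- Let T be an R-tree with an isometric action of a group G, and let Y = {Y_v} be a transverse covering of T. Define the skeleton S as the bipartite graph whose vertex set is Y together with the set of attaching points (points lying in at least two distinct members of Y), with an edge between an attaching point x and a subtree Y ∈ Y whenever x ∈ Y. Then S is a simplicial tree (connected and with no cycles), and the stabilizer of the edge (x, Y) is Stab(x) ∩ Stab(Y). -/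
open Pointwise

/-- The attaching points of a transverse covering: points lying in two distinct members. -/
def IsAttachingPoint {T : Type*} [MetricSpace T] (F : Set (Set T)) (x : T) : Prop :=
  ∃ Y ∈ F, ∃ Y' ∈ F, Y ≠ Y' ∧ x ∈ Y ∩ Y'

/-- The skeleton of a transverse covering: the bipartite graph on members of the covering and
attaching points, with an edge whenever the point lies in the subtree. -/
def skeletonGraph {T : Type*} [MetricSpace T] (F : Set (Set T)) :
    SimpleGraph ((↥F) ⊕ {x : T // IsAttachingPoint F x}) :=
  SimpleGraph.fromRel fun a b =>
    match a, b with
    | Sum.inl Y, Sum.inr x => (x : T) ∈ (Y : Set T)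
    | _, _ => False

section Aux
variable {T : Type*} [MetricSpace T]

lemma four_point_chain (hT : IsRTree T) {a b c d : T}
    (hbc : b ≠ c) (h1 : dist a c = dist a b + dist b c)
    (h2 : dist b d = dist b c + dist c d) :
    dist a d = dist a b + dist b c + dist c d := by
  have h4 := hT.2
  have hdb : dist d b = dist b d := dist_comm d b
  have hcb : dist c b = dist b c := dist_comm c b
  have hdc : dist d c = dist c d := dist_comm d c
  have hbcpos : 0 < dist b c := dist_pos.mpr hbc
  have hub : dist a d ≤ dist a b + dist b c + dist c d := by
    have h := h4 a d c b
    rcases le_max_iff.mp h with h | h <;> linarith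
  have hlb : dist a b + dist b c + dist c d ≤ dist a d := by
    have h := h4 a c b d
    rcases le_max_iff.mp h with h | h <;> linarith
  linarith

lemma taut_of_transverse (hT : IsRTree T) {Y Y' : Set T}
    (hsY : IsSubtree Y) (hsY' : IsSubtree Y')
    (hsub : (Y ∩ Y').Subsingleton)
    {x z y : T} (hx : x ∈ Y) (hzY : z ∈ Y) (hzY' : z ∈ Y') (hy : y ∈ Y') :
    dist x y = dist x z + dist z y := by
  set t := (dist z x + dist z y - dist x y) / 2 with htdef
  have htri1 : dist x y ≤ dist x z + dist z y := dist_triangle x z y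
  have htri2 : dist z y ≤ dist z x + dist x y := dist_triangle z x y
  have hxz : dist x z = dist z x := dist_comm x z
  have ht0 : 0 ≤ t := by rw [htdef]; linarith
  have ht1 : t ≤ dist z x := by rw [htdef]; linarith
  obtain ⟨f, hf0, hfd, hfiso⟩ := hT.1 z x
  set p := f t with hpdef
  have hmemt : t ∈ Set.Icc (0:ℝ) (dist z x) := ⟨ht0, ht1⟩
  have hmem0 : (0:ℝ) ∈ Set.Icc (0:ℝ) (dist z x) := ⟨le_refl _, dist_nonneg⟩
  have hmemd : dist z x ∈ Set.Icc (0:ℝ) (dist z x) := ⟨dist_nonneg, le_refl _⟩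
  have hzp : dist z p = t := by
    have := hfiso 0 hmem0 t hmemt
    rw [hf0] at this
    rw [hpdef, this, abs_of_nonpos (by linarith)]; ring
  have hpx : dist p x = dist z x - t := by
    have := hfiso t hmemt (dist z x) hmemd
    rw [hfd] at this
    rw [hpdef, this, abs_of_nonpos (by linarith)]; ring
  have hpsegzx : p ∈ seg z x := by
    show dist z p + dist p x = dist z x
    rw [hzp, hpx]; ring
  have hpy : dist p y = dist z y - t := by
    have h := hT.2 p y z x
    have e1 : dist p z = t := by rw [dist_comm]; exact hzp
    have e2 : dist y x = dist x y := dist_comm y x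
    have e3 : dist y z = dist z y := dist_comm y z
    have hub : dist p y ≤ dist z y - t := by
      rcases le_max_iff.mp h with h | h
      · rw [e1, e2] at h; rw [htdef] at *; linarith
      · rw [hpx, e3] at h; linarith
    have hlb : dist z y - t ≤ dist p y := by
      have := dist_triangle z p y
      linarith [hzp]
    linarith
  have hpsegzy : p ∈ seg z y := by
    show dist z p + dist p y = dist z y
    rw [hzp, hpy]; ring
  have hpY : p ∈ Y := hsY z hzY x hx hpsegzx
  have hpY' : p ∈ Y' := hsY' z hzY' y hy hpsegzy
  have hpz : p = z := hsub ⟨hpY, hpY'⟩ ⟨hzY, hzY'⟩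
  have : t = 0 := by rw [← hzp, hpz, dist_self]
  rw [htdef] at this
  have : dist z x + dist z y - dist x y = 0 := by linarith
  rw [dist_comm x z, dist_comm z x] at *
  linarith

end Aux

section Graph
variable {T : Type*} [MetricSpace T] {F : Set (Set T)}

lemma skel_adj_inl_inr {Y : ↥F} {x : {x : T // IsAttachingPoint F x}} :
    (skeletonGraph F).Adj (Sum.inl Y) (Sum.inr x) ↔ (x : T) ∈ (Y : Set T) := by
  constructor
  · rintro ⟨hne, h | h⟩
    · exact h
    · exact h.elim
  · intro h
    exact ⟨by simp, Or.inl h⟩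

lemma skel_adj_inr {x : {x : T // IsAttachingPoint F x}}
    {u : (↥F) ⊕ {x : T // IsAttachingPoint F x}}
    (h : (skeletonGraph F).Adj (Sum.inr x) u) :
    ∃ Y : ↥F, u = Sum.inl Y ∧ (x : T) ∈ (Y : Set T) := by
  cases u with
  | inl Y =>
    refine ⟨Y, rfl, ?_⟩
    rcases h with ⟨hne, h | h⟩
    · exact h.elim
    · exact h
  | inr x' => rcases h with ⟨hne, h | h⟩ <;> exact h.elim

lemma skel_adj_inl {Y : ↥F}
    {u : (↥F) ⊕ {x : T // IsAttachingPoint F x}}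
    (h : (skeletonGraph F).Adj (Sum.inl Y) u) :
    ∃ x : {x : T // IsAttachingPoint F x}, u = Sum.inr x ∧ (x : T) ∈ (Y : Set T) := by
  cases u with
  | inl Y' => rcases h with ⟨hne, h | h⟩ <;> exact h.elim
  | inr x => exact ⟨x, rfl, skel_adj_inl_inr.mp h⟩

lemma reach_common {Y Z : Set T} (hY : Y ∈ F) (hZ : Z ∈ F) {w : T}
    (hwY : w ∈ Y) (hwZ : w ∈ Z) :
    (skeletonGraph F).Reachable (Sum.inl ⟨Y, hY⟩) (Sum.inl ⟨Z, hZ⟩) := by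
  by_cases hYZ : Y = Z
  · subst hYZ; rfl
  · have hatt : IsAttachingPoint F w := ⟨Y, hY, Z, hZ, hYZ, hwY, hwZ⟩
    have h1 : (skeletonGraph F).Adj (Sum.inl ⟨Y, hY⟩) (Sum.inr ⟨w, hatt⟩) :=
      skel_adj_inl_inr.mpr hwY
    have h2 : (skeletonGraph F).Adj (Sum.inl ⟨Z, hZ⟩) (Sum.inr ⟨w, hatt⟩) :=
      skel_adj_inl_inr.mpr hwZ
    exact h1.reachable.trans h2.reachable.symm

end Graph

section Conn
variable {T : Type*} [MetricSpace T]

open Filter Topology in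
lemma closed_param {d : ℝ} {f : ℝ → T} {Z : Set T}
    (hf : ∀ s ∈ Set.Icc (0:ℝ) d, ∀ t ∈ Set.Icc (0:ℝ) d, dist (f s) (f t) = |s - t|)
    (hZ : IsClosed Z) : IsClosed {t | t ∈ Set.Icc (0:ℝ) d ∧ f t ∈ Z} := by
  refine IsSeqClosed.isClosed ?_
  intro u t hu ht
  have htI : t ∈ Set.Icc (0:ℝ) d :=
    isClosed_Icc.mem_of_tendsto ht (Filter.Eventually.of_forall fun n => (hu n).1)
  have hconv : Tendsto (fun n => f (u n)) atTop (nhds (f t)) := by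
    rw [tendsto_iff_dist_tendsto_zero]
    have h1 : Tendsto (fun n => |u n - t|) atTop (nhds 0) := by
      have := (ht.sub_const t).abs
      simpa using this
    refine h1.congr fun n => ?_
    rw [hf (u n) (hu n).1 t htI]
  exact ⟨htI, hZ.mem_of_tendsto hconv (Filter.Eventually.of_forall fun n => (hu n).2)⟩

lemma convex_param {d : ℝ} {f : ℝ → T} {Z : Set T}
    (hf : ∀ s ∈ Set.Icc (0:ℝ) d, ∀ t ∈ Set.Icc (0:ℝ) d, dist (f s) (f t) = |s - t|)
    (hZ : IsSubtree Z) {t1 t2 t : ℝ}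
    (h1 : t1 ∈ Set.Icc (0:ℝ) d ∧ f t1 ∈ Z) (h2 : t2 ∈ Set.Icc (0:ℝ) d ∧ f t2 ∈ Z)
    (ht : t ∈ Set.Icc t1 t2) : t ∈ Set.Icc (0:ℝ) d ∧ f t ∈ Z := by
  have htI : t ∈ Set.Icc (0:ℝ) d := ⟨le_trans h1.1.1 ht.1, le_trans ht.2 h2.1.2⟩
  refine ⟨htI, hZ _ h1.2 _ h2.2 ?_⟩
  show dist (f t1) (f t) + dist (f t) (f t2) = dist (f t1) (f t2)
  rw [hf t1 h1.1 t htI, hf t htI t2 h2.1, hf t1 h1.1 t2 h2.1,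
    abs_of_nonpos (by linarith [ht.1]), abs_of_nonpos (by linarith [ht.2]),
    abs_of_nonpos (by linarith [ht.1, ht.2])]
  ring

variable {G : Type*} [Group G] [MulAction G T] {F : Set (Set T)}

lemma skel_reach_inl (hT : IsRTree T) (hF : IsTransverseCovering G F)
    {Y Z : Set T} (hY : Y ∈ F) (hZ : Z ∈ F) :
    (skeletonGraph F).Reachable (Sum.inl ⟨Y, hY⟩) (Sum.inl ⟨Z, hZ⟩) := by
  obtain ⟨p, hp, -⟩ := Set.not_subsingleton_iff.mp (hF.nondeg Y hY)
  obtain ⟨q, hq, -⟩ := Set.not_subsingleton_iff.mp (hF.nondeg Z hZ)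
  by_cases hpq : p = q
  · exact reach_common hY hZ hp (hpq ▸ hq)
  set d := dist p q with hddef
  have hd : 0 < d := dist_pos.mpr hpq
  obtain ⟨f, hf0, hfd, hfiso⟩ := hT.1 p q
  have hA : IsArc (f '' Set.Icc (0:ℝ) d) := ⟨0, d, f, hd, hfiso, rfl⟩
  obtain ⟨r, Ys, hYs, hcov⟩ := hF.covers _ hA
  set I : Fin r → Set ℝ := fun i => {t | t ∈ Set.Icc (0:ℝ) d ∧ f t ∈ Ys i} with hIdef
  set Reach : Fin r → Prop :=
    fun i => (skeletonGraph F).Reachable (Sum.inl ⟨Y, hY⟩) (Sum.inl ⟨Ys i, hYs i⟩) with hRdef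
  set E : Set ℝ := ⋃ i ∈ {i : Fin r | Reach i}, I i with hEdef
  have hIclosed : ∀ i, IsClosed (I i) := fun i =>
    closed_param hfiso (hF.closed _ (hYs i))
  have hEc : IsClosed E := Set.Finite.isClosed_biUnion (Set.toFinite _)
    (fun i _ => hIclosed i)
  have hmemE : ∀ t : ℝ, t ∈ Set.Icc (0:ℝ) d → ∀ i : Fin r, Reach i → f t ∈ Ys i → t ∈ E := by
    intro t htI i hri hfi
    exact Set.mem_biUnion hri ⟨htI, hfi⟩
  have hcov' : ∀ t : ℝ, t ∈ Set.Icc (0:ℝ) d → ∃ i, f t ∈ Ys i := by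
    intro t htI
    exact Set.mem_iUnion.mp (hcov ⟨t, htI, rfl⟩)
  have hE0 : (0:ℝ) ∈ E := by
    obtain ⟨i0, hi0⟩ := hcov' 0 ⟨le_refl _, le_of_lt hd⟩
    refine hmemE 0 ⟨le_refl _, le_of_lt hd⟩ i0 ?_ hi0
    exact reach_common hY (hYs i0) hp (by rwa [hf0] at hi0)
  have hEb : BddAbove E := by
    refine ⟨d, fun t ht => ?_⟩
    simp only [hEdef, Set.mem_iUnion] at ht
    obtain ⟨i, -, hi⟩ := ht
    exact hi.1.2
  set s := sSup E with hsdef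
  have hsE : s ∈ E := hEc.csSup_mem ⟨0, hE0⟩ hEb
  obtain ⟨istar, hristar, hsI⟩ := Set.mem_iUnion₂.mp hsE
  have hsIcc : s ∈ Set.Icc (0:ℝ) d := hsI.1
  by_cases hsd : s = d
  · have hq' : f s ∈ Ys istar := hsI.2
    rw [hsd, hfd] at hq'
    exact hristar.trans (reach_common (hYs istar) hZ hq' hq)
  · have hslt : s < d := lt_of_le_of_ne hsIcc.2 hsd
    exfalso
    set u : ℕ → ℝ := fun n => s + (d - s) / (n + 1) with hudef
    have hult : ∀ n, s < u n := by
      intro n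
      have : (0:ℝ) < (d - s) / (n + 1) :=
        div_pos (by linarith) (by positivity)
      simp only [hudef]; linarith
    have huIcc : ∀ n, u n ∈ Set.Icc (0:ℝ) d := by
      intro n
      refine ⟨le_trans hsIcc.1 (le_of_lt (hult n)), ?_⟩
      have h1 : (d - s) / (n + 1) ≤ (d - s) / 1 := by
        gcongr
        · linarith
      simp only [hudef]; linarith [h1]
    have : ∀ n : ℕ, ∃ i, f (u n) ∈ Ys i := fun n => hcov' (u n) (huIcc n)
    choose c hc using this
    obtain ⟨j, hj'⟩ := Finite.exists_infinite_fiber c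
    have hj : (c ⁻¹' {j}).Infinite := Set.infinite_coe_iff.mp hj'
    have hsj : s ∈ I j := by
      have hclosure : s ∈ closure (I j) := by
        rw [Metric.mem_closure_iff]
        intro ε hε
        obtain ⟨N, hN⟩ := exists_nat_gt ((d - s) / ε)
        obtain ⟨n, hn, hnN⟩ := hj.exists_gt N
        have hnj : c n = j := by rwa [Set.mem_preimage, Set.mem_singleton_iff] at hn
        refine ⟨u n, ⟨huIcc n, hnj ▸ hc n⟩, ?_⟩
        rw [Real.dist_eq, abs_of_nonpos (by linarith [hult n])]
        have hn1 : (N:ℝ) + 1 ≤ (n:ℝ) + 1 := by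
          have : (N:ℝ) ≤ n := by exact_mod_cast le_of_lt hnN
          linarith
        have h2 : (d - s) / ((n:ℝ) + 1) ≤ (d - s) / ((N:ℝ) + 1) := by
          rw [div_le_div_iff₀ (by positivity) (by positivity)]
          nlinarith
        have h3 : (d - s) / ((N:ℝ) + 1) < ε := by
          rw [div_lt_iff₀ (by positivity)]
          rw [div_lt_iff₀ hε] at hN
          nlinarith [hε]
        simp only [hudef]
        have : -(s - (s + (d - s)/((n:ℝ)+1))) = (d-s)/((n:ℝ)+1) := by ring
        rw [this]
        linarith
      rwa [(hIclosed j).closure_eq] at hclosure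
    have hreachj : Reach j := by
      refine hristar.trans (reach_common (hYs istar) (hYs j) hsI.2 hsj.2)
    obtain ⟨n0, hn0⟩ := hj.nonempty
    have hn0' : c n0 = j := by rwa [Set.mem_preimage, Set.mem_singleton_iff] at hn0
    have : u n0 ∈ E := hmemE (u n0) (huIcc n0) j hreachj (hn0' ▸ hc n0)
    exact absurd (le_csSup hEb this) (not_le.mpr (hult n0))

end Conn

section Cycle
variable {T : Type*} [MetricSpace T] {G : Type*} [Group G] [MulAction G T] {F : Set (Set T)}

lemma ne_of_vertex_ne {x y : {x : T // IsAttachingPoint F x}}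
    (h : x ≠ y) : (x : T) ≠ (y : T) := fun he => h (Subtype.ext he)

lemma subtree_ne_of_vertex_ne {Y Z : ↥F} (h : Y ≠ Z) : (Y : Set T) ≠ (Z : Set T) :=
  fun he => h (Subtype.ext he)

lemma skel_path_chain (hT : IsRTree T) (hF : IsTransverseCovering G F) :
    ∀ (n : ℕ) (x y : {x : T // IsAttachingPoint F x})
      (p : (skeletonGraph F).Walk (Sum.inr x) (Sum.inr y)),
      p.length = n → p.IsPath → 0 < n →
      ∃ (x₁ : T) (Yf : ↥F), (x : T) ∈ (Yf : Set T) ∧ x₁ ∈ (Yf : Set T) ∧ (x : T) ≠ x₁ ∧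
        Sum.inl Yf ∈ p.support ∧
        dist (x : T) (y : T) = dist (x : T) x₁ + dist x₁ (y : T) := by
  intro n
  induction n using Nat.strong_induction_on with
  | _ n IH =>
    intro x y p hlen hpath hpos
    cases p with
    | nil => rw [SimpleGraph.Walk.length_nil] at hlen; omega
    | cons h1 p' =>
      rename_i u
      obtain ⟨Yf, rfl, hxYf⟩ := skel_adj_inr h1
      cases p' with
      | cons h2 q =>
        rename_i u2
        obtain ⟨x1, rfl, hx1Yf⟩ := skel_adj_inl h2
        -- nodup facts
        have hnd := hpath.support_nodup
        rw [SimpleGraph.Walk.support_cons, SimpleGraph.Walk.support_cons] at hnd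
        rw [List.nodup_cons, List.nodup_cons] at hnd
        have hxnot := hnd.1
        have hYfnot := hnd.2.1
        have hxne : (x : T) ≠ (x1 : T) := by
          apply ne_of_vertex_ne
          intro hxx1
          exact hxnot (by rw [List.mem_cons]; right; rw [hxx1]; exact q.start_mem_support)
        cases q with
        | nil =>
          refine ⟨(y : T), Yf, hxYf, hx1Yf, hxne, ?_, by simp⟩
          rw [SimpleGraph.Walk.support_cons]
          exact List.mem_cons_of_mem _ List.mem_cons_self
        | cons h3 q' =>
          rename_i u3
          set q : (skeletonGraph F).Walk (Sum.inr x1) (Sum.inr y) :=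
            SimpleGraph.Walk.cons h3 q' with hqdef
          have hqlen : q.length < n := by
            rw [← hlen]
            simp [hqdef]
          have hqpos : 0 < q.length := by simp [hqdef]
          have hqpath : q.IsPath := (hpath.of_cons).of_cons
          obtain ⟨x2, Y2, hx1Y2, hx2Y2, hx1ne, hY2mem, hdist⟩ :=
            IH q.length hqlen x1 y q rfl hqpath hqpos
          have hYfY2 : (Yf : Set T) ≠ (Y2 : Set T) := by
            apply subtree_ne_of_vertex_ne
            intro he
            exact hYfnot (he ▸ hY2mem)
          have htaut : dist (x : T) x2 = dist (x : T) (x1 : T) + dist (x1 : T) x2 :=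
            taut_of_transverse hT (hF.subtree _ Yf.2) (hF.subtree _ Y2.2)
              (hF.transverse _ Yf.2 _ Y2.2 hYfY2) hxYf hx1Yf hx1Y2 hx2Y2
          have hchain := four_point_chain hT hx1ne htaut hdist
          refine ⟨(x1 : T), Yf, hxYf, hx1Yf, hxne, ?_, ?_⟩
          · rw [SimpleGraph.Walk.support_cons]
            exact List.mem_cons_of_mem _ List.mem_cons_self
          · rw [hchain, hdist]; ring

lemma skel_no_cycle_inl (hT : IsRTree T) (hF : IsTransverseCovering G F)
    (Yv : ↥F) (c : (skeletonGraph F).Walk (Sum.inl Yv) (Sum.inl Yv))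
    (hc : c.IsCycle) : False := by
  cases c with
  | nil => simpa using hc.three_le_length
  | cons h1 p =>
    rename_i u
    obtain ⟨x0, rfl, hx0Yv⟩ := skel_adj_inl h1
    have hp : p.IsPath := ((SimpleGraph.Walk.cons_isCycle_iff p h1).mp hc).1
    have hplen : 2 ≤ p.length := by
      have h3 := hc.three_le_length
      rw [SimpleGraph.Walk.length_cons] at h3
      omega
    have hpr : p.reverse.IsPath := hp.reverse
    cases hw : p.reverse with
    | cons h2 q =>
      rename_i u2
      obtain ⟨xk, rfl, hxkYv⟩ := skel_adj_inl h2
      have hqpath : q.IsPath := by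
        rw [hw] at hpr
        exact hpr.of_cons
      have hqlen : 0 < q.length := by
        have : p.reverse.length = p.length := SimpleGraph.Walk.length_reverse p
        rw [hw, SimpleGraph.Walk.length_cons] at this
        omega
      obtain ⟨x1, Y1, hxkY1, hx1Y1, hxkne, hY1mem, hdist⟩ :=
        skel_path_chain hT hF q.length xk x0 q rfl hqpath hqlen
      have hYvnot : Sum.inl Yv ∉ q.support := by
        rw [hw] at hpr
        have hnd := hpr.support_nodup
        rw [SimpleGraph.Walk.support_cons, List.nodup_cons] at hnd
        exact hnd.1
      have hY1Yv : (Y1 : Set T) ≠ (Yv : Set T) := by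
        apply subtree_ne_of_vertex_ne
        intro he
        exact hYvnot (he ▸ hY1mem)
      have htaut : dist (x1 : T) (x0 : T) = dist (x1 : T) (xk : T) + dist (xk : T) (x0 : T) :=
        taut_of_transverse hT (hF.subtree _ Y1.2) (hF.subtree _ Yv.2)
          (hF.transverse _ Y1.2 _ Yv.2 hY1Yv) hx1Y1 hxkY1 hxkYv hx0Yv
      have hcomm : dist (x1 : T) (xk : T) = dist (xk : T) x1 := dist_comm _ _
      have : dist (xk : T) (x1 : T) = 0 := by linarith
      exact hxkne (dist_eq_zero.mp this)

end Cycle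

/-- The skeleton of a transverse covering of a (nondegenerate) `ℝ`-tree is a simplicial tree,
and the stabilizer of an edge `(x, Y)` is `Stab(x) ∩ Stab(Y)`. -/
theorem skeleton_isTree_and_edge_stabilizer
    {T G : Type*} [MetricSpace T] [Group G] [MulAction G T]
    (hT : IsRTree T) (hiso : ∀ g : G, Isometry fun x : T => g • x)
    (hnontriv : ∃ x y : T, x ≠ y)
    (F : Set (Set T)) (hF : IsTransverseCovering G F) :
    (skeletonGraph F).IsTree ∧
      ∀ (x : T) (Y : Set T), Y ∈ F → x ∈ Y → IsAttachingPoint F x →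
        MulAction.stabilizer G (x, Y) =
          MulAction.stabilizer G x ⊓ MulAction.stabilizer G Y := by
  constructor
  · constructor
    · -- Connected
      rw [SimpleGraph.connected_iff]
      have key : ∀ (Yv : ↥F) (xv : {x : T // IsAttachingPoint F x}),
          (skeletonGraph F).Reachable (Sum.inl Yv) (Sum.inr xv) := by
        intro Yv xv
        obtain ⟨Y1, hY1, Y2, hY2, hne, hm⟩ := xv.2
        exact (skel_reach_inl hT hF Yv.2 hY1).trans
          (SimpleGraph.Adj.reachable (skel_adj_inl_inr.mpr hm.1))
      constructor
      · intro a b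
        cases a with
        | inl Ya =>
          cases b with
          | inl Yb => exact skel_reach_inl hT hF Ya.2 Yb.2
          | inr xb => exact key Ya xb
        | inr xa =>
          cases b with
          | inl Yb => exact (key Yb xa).symm
          | inr xb =>
            obtain ⟨Y1, hY1, -⟩ := xa.2
            exact ((key ⟨Y1, hY1⟩ xa).symm).trans (key ⟨Y1, hY1⟩ xb)
      · obtain ⟨a, b, hab⟩ := hnontriv
        obtain ⟨f, hf0, hfd, hfiso⟩ := hT.1 a b
        have hA : IsArc (f '' Set.Icc 0 (dist a b)) :=
          ⟨0, dist a b, f, dist_pos.mpr hab, hfiso, rfl⟩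
        obtain ⟨r, Ys, hYs, hcov⟩ := hF.covers _ hA
        have ha : a ∈ ⋃ i, Ys i := hcov ⟨0, ⟨le_refl _, dist_nonneg⟩, hf0⟩
        obtain ⟨i, hi⟩ := Set.mem_iUnion.mp ha
        exact ⟨Sum.inl ⟨Ys i, hYs i⟩⟩
    · -- Acyclic
      intro v c hc
      cases v with
      | inl Yv => exact skel_no_cycle_inl hT hF Yv c hc
      | inr x =>
        cases c with
        | nil => simpa using hc.three_le_length
        | cons h1 p =>
          obtain ⟨Yv, rfl, -⟩ := skel_adj_inr h1
          have hmem : Sum.inl Yv ∈ (SimpleGraph.Walk.cons h1 p).support := by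
            rw [SimpleGraph.Walk.support_cons]
            exact List.mem_cons_of_mem _ p.start_mem_support
          classical
          exact skel_no_cycle_inl hT hF Yv _ (hc.rotate hmem)
  · intro x Y hY hx hatt
    ext g
    simp [MulAction.mem_stabilizer_iff, Subgroup.mem_inf, Prod.ext_iff]
end
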